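/- arXiv:2211.13386 — 8 statements merged into one kernel-verified Lean document; each statement's English description precedes it below -/
import Mathlib

section
/- Fix integers n ≥ 1, d ≥ 1, k ≥ 1, points x_1,…,x_n, y_1,…,y_n ∈ ℝ^d, and vectors α, β ∈ ℝ^n. Then the function U ↦ max_{i,j ∈ [n]} { −(α_i + β_j + ‖U^T(x_i − y_j)‖²) } + ‖C‖_∞ ‖U‖_F² is convex on ℝ^{d×k}, where C ∈ ℝ^{n×n} has entries C_ij = ‖x_i − y_j‖² and ‖C‖_∞ = max_{i,j} |C_ij|. (Equivalently, the dual objective h(α,β,U) = r^Tα + c^Tβ + max_{i,j}{−φ_ij(α,β,U)} is ‖C‖_∞-weakly convex in U.) -/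
open scoped BigOperators
open Matrix

noncomputable section

namespace PRWPaper

/-- Squared Euclidean norm of a vector in `ℝ^d`. -/
def sqnorm {d : ℕ} (v : Fin d → ℝ) : ℝ := ∑ l, (v l) ^ 2

/-- `‖Uᵀ w‖²  = ⟨w wᵀ, U Uᵀ⟩` for `U ∈ ℝ^{d×k}`, `w ∈ ℝ^d`. -/
def projSq {d k : ℕ} (U : Matrix (Fin d) (Fin k) ℝ) (w : Fin d → ℝ) : ℝ :=
  ∑ m, (∑ l, U l m * w l) ^ 2

/-- `C_ij = ‖x_i - y_j‖²`. -/
def costC {n d : ℕ} (x y : Fin n → Fin d → ℝ) (i j : Fin n) : ℝ :=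
  sqnorm (fun l => x i l - y j l)

/-- `[C(U)]_ij = ‖Uᵀ (x_i - y_j)‖² = ⟨M_ij, U Uᵀ⟩`. -/
def costCU {n d k : ℕ} (x y : Fin n → Fin d → ℝ) (U : Matrix (Fin d) (Fin k) ℝ)
    (i j : Fin n) : ℝ :=
  projSq U (fun l => x i l - y j l)

/-- `‖C‖_∞ = max_{i,j} |C_ij|`. -/
def CInf {n d : ℕ} (x y : Fin n → Fin d → ℝ) : ℝ :=
  ⨆ p : Fin n × Fin n, |costC x y p.1 p.2|

/-- `φ_ij(α, β, U) = α_i + β_j + ⟨M_ij, U Uᵀ⟩`. -/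
def phi {n d k : ℕ} (x y : Fin n → Fin d → ℝ) (α β : Fin n → ℝ)
    (U : Matrix (Fin d) (Fin k) ℝ) (i j : Fin n) : ℝ :=
  α i + β j + costCU x y U i j

/-- `min_{i,j} φ_ij(α, β, U)`. -/
def phiMin {n d k : ℕ} (x y : Fin n → Fin d → ℝ) (α β : Fin n → ℝ)
    (U : Matrix (Fin d) (Fin k) ℝ) : ℝ :=
  ⨅ p : Fin n × Fin n, phi x y α β U p.1 p.2

/-- Membership in the (relatively open) simplex `Δ^n`. -/
def inSimplex {n : ℕ} (r : Fin n → ℝ) : Prop :=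
  (∑ i, r i) = 1 ∧ ∀ i, 0 < r i

/-- Membership in the transportation polytope `Π(r, c)`. -/
def inPlans {n : ℕ} (r c : Fin n → ℝ) (π : Matrix (Fin n) (Fin n) ℝ) : Prop :=
  (∀ i, ∑ j, π i j = r i) ∧ (∀ j, ∑ i, π i j = c j) ∧ ∀ i j, 0 ≤ π i j

/-- `ℓ₁` norm of a matrix. -/
def l1norm {n : ℕ} (A : Matrix (Fin n) (Fin n) ℝ) : ℝ := ∑ i, ∑ j, |A i j|

/-- `ζ_η(x, κ)_ij = κ_ij exp(-φ_ij(x)/η)`. -/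
def zeta {n d k : ℕ} (η : ℝ) (κ : Matrix (Fin n) (Fin n) ℝ) (x y : Fin n → Fin d → ℝ)
    (α β : Fin n → ℝ) (U : Matrix (Fin d) (Fin k) ℝ) : Matrix (Fin n) (Fin n) ℝ :=
  fun i j => κ i j * Real.exp (-(phi x y α β U i j) / η)

/-- `L_η((α,β,U), κ) = rᵀα + cᵀβ + η log ‖ζ_η((α,β,U),κ)‖₁`. -/
def Lfun {n d k : ℕ} (η : ℝ) (κ : Matrix (Fin n) (Fin n) ℝ) (r c : Fin n → ℝ)
    (x y : Fin n → Fin d → ℝ) (α β : Fin n → ℝ) (U : Matrix (Fin d) (Fin k) ℝ) : ℝ :=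
  (∑ i, r i * α i) + (∑ j, c j * β j) + η * Real.log (l1norm (zeta η κ x y α β U))

/-- `π_η(x, κ) = ζ_η(x,κ)/‖ζ_η(x,κ)‖₁`. -/
def piEta {n d k : ℕ} (η : ℝ) (κ : Matrix (Fin n) (Fin n) ℝ) (x y : Fin n → Fin d → ℝ)
    (α β : Fin n → ℝ) (U : Matrix (Fin d) (Fin k) ℝ) : Matrix (Fin n) (Fin n) ℝ :=
  fun i j => zeta η κ x y α β U i j / l1norm (zeta η κ x y α β U)

/-- Entropy `H(π) = -Σ_ij π_ij log π_ij` (with the convention `0 log 0 = 0`,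
which holds since `Real.log 0 = 0`). -/
def entropy {n : ℕ} (π : Matrix (Fin n) (Fin n) ℝ) : ℝ :=
  -∑ i, ∑ j, π i j * Real.log (π i j)

/-- `h(π, U) = ⟨C(U) - η log κ, π⟩ - η H(π)`. -/
def hObj {n d k : ℕ} (η : ℝ) (κ : Matrix (Fin n) (Fin n) ℝ) (x y : Fin n → Fin d → ℝ)
    (U : Matrix (Fin d) (Fin k) ℝ) (π : Matrix (Fin n) (Fin n) ℝ) : ℝ :=
  (∑ i, ∑ j, (costCU x y U i j - η * Real.log (κ i j)) * π i j) - η * entropy π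

/-- `‖π 1 - r‖₁`, the row-sum feasibility residual. -/
def rowRes {n : ℕ} (r : Fin n → ℝ) (π : Matrix (Fin n) (Fin n) ℝ) : ℝ :=
  ∑ i, |(∑ j, π i j) - r i|

/-- `‖πᵀ 1 - c‖₁`, the column-sum feasibility residual. -/
def colRes {n : ℕ} (c : Fin n → ℝ) (π : Matrix (Fin n) (Fin n) ℝ) : ℝ :=
  ∑ j, |(∑ i, π i j) - c j|

/-- Variation seminorm `‖v‖_var = max_i v_i - min_i v_i` of a vector. -/
def varVec {n : ℕ} (v : Fin n → ℝ) : ℝ := (⨆ i, v i) - (⨅ i, v i)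

/-- `‖log κ‖_var = max_{ij} log κ_ij - min_{ij} log κ_ij`. -/
def varLog {n : ℕ} (κ : Matrix (Fin n) (Fin n) ℝ) : ℝ :=
  (⨆ p : Fin n × Fin n, Real.log (κ p.1 p.2)) - (⨅ p : Fin n × Fin n, Real.log (κ p.1 p.2))

/-- `‖log κ‖_∞ = max_{ij} |log κ_ij|`. -/
def logInf {n : ℕ} (κ : Matrix (Fin n) (Fin n) ℝ) : ℝ :=
  ⨆ p : Fin n × Fin n, |Real.log (κ p.1 p.2)|

/-- Frobenius norm of a matrix. -/
def frobNorm {d k : ℕ} (A : Matrix (Fin d) (Fin k) ℝ) : ℝ :=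
  Real.sqrt (∑ l, ∑ m, (A l m) ^ 2)

/-- `V_π = Σ_ij π_ij M_ij` with `M_ij = (x_i - y_j)(x_i - y_j)ᵀ`. -/
def Vmat {n d : ℕ} (x y : Fin n → Fin d → ℝ) (π : Matrix (Fin n) (Fin n) ℝ) :
    Matrix (Fin d) (Fin d) ℝ :=
  fun l l' => ∑ i, ∑ j, π i j * ((x i l - y j l) * (x i l' - y j l'))

/-- Projection onto the tangent space of the Stiefel manifold at `U`:
`Proj_{T_U S}(A) = A - U (UᵀA + AᵀU)/2`. -/
def projTan {d k : ℕ} (U A : Matrix (Fin d) (Fin k) ℝ) : Matrix (Fin d) (Fin k) ℝ :=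
  A - (1 / 2 : ℝ) • (U * (Uᵀ * A + Aᵀ * U))

/-- Transport plan `(u_i A_ij v_j)_{ij}` normalized to total mass one. -/
def sinkMat {n : ℕ} (A : Matrix (Fin n) (Fin n) ℝ) (u v : Fin n → ℝ) :
    Matrix (Fin n) (Fin n) ℝ :=
  fun i j => u i * A i j * v j / (∑ i', ∑ j', u i' * A i' j' * v j')

section Aux

lemma convexOn_ciSup_fin {ι E : Type*} [Finite ι] [Nonempty ι]
    [AddCommMonoid E] [Module ℝ E] (f : ι → E → ℝ)
    (h : ∀ i, ConvexOn ℝ (Set.univ : Set E) (f i)) :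
    ConvexOn ℝ (Set.univ : Set E) (fun x => ⨆ i, f i x) := by
  refine ⟨convex_univ, fun U _ V _ a b ha hb hab => ?_⟩
  refine ciSup_le fun i => ?_
  have h1 : f i (a • U + b • V) ≤ a * f i U + b * f i V := (h i).2 trivial trivial ha hb hab
  have h2 : f i U ≤ ⨆ j, f j U :=
    le_ciSup (f := fun j => f j U) (Set.Finite.bddAbove (Set.finite_range _)) i
  have h3 : f i V ≤ ⨆ j, f j V :=
    le_ciSup (f := fun j => f j V) (Set.Finite.bddAbove (Set.finite_range _)) i
  have := mul_le_mul_of_nonneg_left h2 ha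
  have := mul_le_mul_of_nonneg_left h3 hb
  simp only [smul_eq_mul]
  linarith

lemma ciSup_add_const_fin {ι : Type*} [Finite ι] [Nonempty ι] (g : ι → ℝ) (c : ℝ) :
    (⨆ i, g i) + c = ⨆ i, (g i + c) := by
  have bdd : BddAbove (Set.range g) := Set.Finite.bddAbove (Set.finite_range _)
  have bdd' : BddAbove (Set.range fun i => g i + c) := Set.Finite.bddAbove (Set.finite_range _)
  refine le_antisymm ?_ (ciSup_le fun i => add_le_add_left (le_ciSup bdd i) c)
  have h2 : (⨆ i, g i) ≤ (⨆ i, (g i + c)) - c :=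
    ciSup_le fun i => by linarith [le_ciSup bdd' i]
  linarith

lemma sq_combo {a b s t : ℝ} (hab : a + b = 1) :
    (a * s + b * t) ^ 2 = a * s ^ 2 + b * t ^ 2 - a * b * (s - t) ^ 2 := by
  have : b = 1 - a := by linarith
  subst this; ring

/-- Column-sum identity for `projSq` of a convex combination. -/
lemma projSq_combo {d k : ℕ} (U V : Matrix (Fin d) (Fin k) ℝ) (w : Fin d → ℝ)
    {a b : ℝ} (hab : a + b = 1) :
    projSq (a • U + b • V) w
      = a * projSq U w + b * projSq V w - a * b * projSq (U - V) w := by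
  have hcol : ∀ m : Fin k, (∑ l, (a • U + b • V) l m * w l)
      = a * (∑ l, U l m * w l) + b * (∑ l, V l m * w l) := by
    intro m
    simp only [Matrix.add_apply, Matrix.smul_apply, smul_eq_mul, add_mul,
      Finset.sum_add_distrib, Finset.mul_sum, mul_assoc]
  have hcol' : ∀ m : Fin k, (∑ l, (U - V) l m * w l)
      = (∑ l, U l m * w l) - (∑ l, V l m * w l) := by
    intro m
    simp only [Matrix.sub_apply, sub_mul, Finset.sum_sub_distrib]
  have key : ∀ m : Fin k, (∑ l, (a • U + b • V) l m * w l) ^ 2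
      = a * (∑ l, U l m * w l) ^ 2 + b * (∑ l, V l m * w l) ^ 2
        - a * b * (∑ l, (U - V) l m * w l) ^ 2 := by
    intro m
    rw [hcol m, hcol' m]
    exact sq_combo hab
  unfold projSq
  calc ∑ m, (∑ l, (a • U + b • V) l m * w l) ^ 2
      = ∑ m, (a * (∑ l, U l m * w l) ^ 2 + b * (∑ l, V l m * w l) ^ 2
          - a * b * (∑ l, (U - V) l m * w l) ^ 2) :=
        Finset.sum_congr rfl fun m _ => key m
    _ = _ := by
        rw [Finset.sum_sub_distrib, Finset.sum_add_distrib, ← Finset.mul_sum,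
          ← Finset.mul_sum, ← Finset.mul_sum]

/-- Frobenius-square identity for a convex combination. -/
lemma frobSq_combo {d k : ℕ} (U V : Matrix (Fin d) (Fin k) ℝ)
    {a b : ℝ} (hab : a + b = 1) :
    (∑ l, ∑ m, ((a • U + b • V) l m) ^ 2)
      = a * (∑ l, ∑ m, (U l m) ^ 2) + b * (∑ l, ∑ m, (V l m) ^ 2)
        - a * b * (∑ l, ∑ m, ((U - V) l m) ^ 2) := by
  simp only [Matrix.add_apply, Matrix.smul_apply, Matrix.sub_apply, smul_eq_mul,
    Finset.mul_sum, ← Finset.sum_sub_distrib, ← Finset.sum_add_distrib]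
  refine Finset.sum_congr rfl fun l _ => Finset.sum_congr rfl fun m _ => sq_combo hab

/-- Cauchy–Schwarz bound: `‖Wᵀw‖² ≤ ‖w‖² ‖W‖_F²`. -/
lemma projSq_le {d k : ℕ} (W : Matrix (Fin d) (Fin k) ℝ) (w : Fin d → ℝ) :
    projSq W w ≤ sqnorm w * (∑ l, ∑ m, (W l m) ^ 2) := by
  rw [Finset.sum_comm, Finset.mul_sum]
  refine Finset.sum_le_sum fun m _ => ?_
  calc (∑ l, W l m * w l) ^ 2
      ≤ (∑ l, (W l m) ^ 2) * (∑ l, (w l) ^ 2) :=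
        Finset.sum_mul_sq_le_sq_mul_sq _ _ _
    _ = sqnorm w * ∑ l, (W l m) ^ 2 := by rw [sqnorm, mul_comm]

lemma sqnorm_le_CInf {n d : ℕ} (x y : Fin n → Fin d → ℝ) (i j : Fin n) (hn : 1 ≤ n) :
    sqnorm (fun l => x i l - y j l) ≤ CInf x y := by
  have : Nonempty (Fin n) := ⟨⟨0, hn⟩⟩
  calc sqnorm (fun l => x i l - y j l) = costC x y i j := rfl
    _ ≤ |costC x y i j| := le_abs_self _
    _ ≤ CInf x y :=
        le_ciSup (f := fun p : Fin n × Fin n => |costC x y p.1 p.2|)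
          (Set.Finite.bddAbove (Set.finite_range _)) (i, j)

lemma CInf_nonneg {n d : ℕ} (x y : Fin n → Fin d → ℝ) (hn : 1 ≤ n) :
    0 ≤ CInf x y := by
  have : Nonempty (Fin n) := ⟨⟨0, hn⟩⟩
  obtain ⟨i⟩ := this
  calc (0 : ℝ) ≤ |costC x y i i| := abs_nonneg _
    _ ≤ CInf x y :=
        le_ciSup (f := fun p : Fin n × Fin n => |costC x y p.1 p.2|)
          (Set.Finite.bddAbove (Set.finite_range _)) (i, i)

lemma sqnorm_nonneg' {d : ℕ} (w : Fin d → ℝ) : 0 ≤ sqnorm w :=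
  Finset.sum_nonneg fun _ _ => sq_nonneg _

lemma frobSq_nonneg {d k : ℕ} (W : Matrix (Fin d) (Fin k) ℝ) :
    0 ≤ ∑ l, ∑ m, (W l m) ^ 2 :=
  Finset.sum_nonneg fun _ _ => Finset.sum_nonneg fun _ _ => sq_nonneg _

/-- Each individual regularized term is convex. -/
lemma term_convex {n d k : ℕ} (hn : 1 ≤ n) (x y : Fin n → Fin d → ℝ)
    (α β : Fin n → ℝ) (p : Fin n × Fin n) :
    ConvexOn ℝ (Set.univ : Set (Matrix (Fin d) (Fin k) ℝ))
      (fun U => -(phi x y α β U p.1 p.2) + CInf x y * (∑ l, ∑ m, (U l m) ^ 2)) := by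
  refine ⟨convex_univ, fun U _ V _ a b ha hb hab => ?_⟩
  set w : Fin d → ℝ := fun l => x p.1 l - y p.2 l with hw
  simp only [smul_eq_mul, phi, costCU, projSq_combo U V w hab, frobSq_combo U V hab]
  rw [← hw, projSq_combo U V w hab]
  have h1 : projSq (U - V) w ≤ sqnorm w * (∑ l, ∑ m, ((U - V) l m) ^ 2) :=
    projSq_le _ _
  have h2 : sqnorm w ≤ CInf x y := sqnorm_le_CInf x y p.1 p.2 hn
  have h3 : 0 ≤ ∑ l, ∑ m, ((U - V) l m) ^ 2 := frobSq_nonneg _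
  have h4 : sqnorm w * (∑ l, ∑ m, ((U - V) l m) ^ 2)
      ≤ CInf x y * (∑ l, ∑ m, ((U - V) l m) ^ 2) := mul_le_mul_of_nonneg_right h2 h3
  have h5 : projSq (U - V) w ≤ CInf x y * (∑ l, ∑ m, ((U - V) l m) ^ 2) := h1.trans h4
  have hab' : 0 ≤ a * b := mul_nonneg ha hb
  have h6 : a * b * projSq (U - V) w
      ≤ a * b * (CInf x y * (∑ l, ∑ m, ((U - V) l m) ^ 2)) :=
    mul_le_mul_of_nonneg_left h5 hab'
  have hA : α p.1 = a * α p.1 + b * α p.1 := by rw [← add_mul, hab, one_mul]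
  have hB : β p.2 = a * β p.2 + b * β p.2 := by rw [← add_mul, hab, one_mul]
  nlinarith [h6]

end Aux

/-- the function
`U ↦ max_{i,j} { -(α_i + β_j + ‖Uᵀ(x_i - y_j)‖²) } + ‖C‖_∞ ‖U‖_F²`
is convex on `ℝ^{d×k}`. -/
theorem statement0 (n d k : ℕ) (hn : 1 ≤ n) (hd : 1 ≤ d) (hk : 1 ≤ k)
    (x y : Fin n → Fin d → ℝ) (α β : Fin n → ℝ) :
    ConvexOn ℝ (Set.univ : Set (Matrix (Fin d) (Fin k) ℝ))
      (fun U => (⨆ p : Fin n × Fin n, -(phi x y α β U p.1 p.2))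
        + CInf x y * (∑ l, ∑ m, (U l m) ^ 2)) := by
  have : Nonempty (Fin n) := ⟨⟨0, hn⟩⟩
  have heq : (fun U : Matrix (Fin d) (Fin k) ℝ =>
      (⨆ p : Fin n × Fin n, -(phi x y α β U p.1 p.2))
        + CInf x y * (∑ l, ∑ m, (U l m) ^ 2))
      = fun U => ⨆ p : Fin n × Fin n,
          (-(phi x y α β U p.1 p.2) + CInf x y * (∑ l, ∑ m, (U l m) ^ 2)) :=
    funext fun U => ciSup_add_const_fin _ _
  rw [heq]
  exact convexOn_ciSup_fin _ fun p => term_convex hn x y α β p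

end PRWPaper
end
end

section
/- Let n ≥ 1, r, c ∈ Δ^n, points x_1,…,x_n, y_1,…,y_n ∈ ℝ^d, U ∈ ℝ^{d×k}, and α, β ∈ ℝ^n; set x = (α, β, U). Then for every π̃ ∈ Π(r,c) and every π ∈ Π(r,c), ⟨π̃, C(U)⟩ − ⟨π, C(U)⟩ ≤ ⟨π̃, Z(x)⟩. In particular, f(π̃,U) − min_{π ∈ Π(r,c)} f(π,U) ≤ ⟨π̃, Z(x)⟩, where f(π,U) = ⟨π, C(U)⟩. -/
open scoped BigOperators
open Matrix

noncomputable section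

namespace PRWPaper

/-- for `π̃, π ∈ Π(r,c)`,
`⟨π̃, C(U)⟩ - ⟨π, C(U)⟩ ≤ ⟨π̃, Z(x)⟩`, where `Z(x)_ij = φ_ij(x) - min_{ij} φ_ij(x)`. -/
theorem statement1 (n d k : ℕ) (hn : 1 ≤ n) (r c : Fin n → ℝ)
    (hr : inSimplex r) (hc : inSimplex c) (x y : Fin n → Fin d → ℝ)
    (U : Matrix (Fin d) (Fin k) ℝ) (α β : Fin n → ℝ)
    (πt π : Matrix (Fin n) (Fin n) ℝ) (hπt : inPlans r c πt) (hπ : inPlans r c π) :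
    (∑ i, ∑ j, πt i j * costCU x y U i j) - (∑ i, ∑ j, π i j * costCU x y U i j)
      ≤ ∑ i, ∑ j, πt i j * (phi x y α β U i j - phiMin x y α β U) := by
  haveI : NeZero n := ⟨Nat.one_le_iff_ne_zero.mp hn⟩
  have hexp : ∀ π' : Matrix (Fin n) (Fin n) ℝ, inPlans r c π' →
      ∑ i, ∑ j, π' i j * phi x y α β U i j
        = (∑ i, r i * α i) + (∑ j, c j * β j)
          + ∑ i, ∑ j, π' i j * costCU x y U i j := by
    intro π' hπ'
    have h1 : ∑ i, ∑ j, π' i j * α i = ∑ i, r i * α i := by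
      refine Finset.sum_congr rfl fun i _ => ?_
      rw [← Finset.sum_mul, hπ'.1 i]
    have h2 : ∑ i, ∑ j, π' i j * β j = ∑ j, c j * β j := by
      rw [Finset.sum_comm]
      refine Finset.sum_congr rfl fun j _ => ?_
      rw [← Finset.sum_mul, hπ'.2.1 j]
    calc ∑ i, ∑ j, π' i j * phi x y α β U i j
        = (∑ i, ∑ j, π' i j * α i) + (∑ i, ∑ j, π' i j * β j)
          + ∑ i, ∑ j, π' i j * costCU x y U i j := by
          simp only [phi, mul_add, Finset.sum_add_distrib]
      _ = _ := by rw [h1, h2]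
  have hmass_t : ∑ i, ∑ j, πt i j = 1 := by
    have : ∀ i, ∑ j, πt i j = r i := hπt.1
    simp only [this]; exact hr.1
  have hmass : ∑ i, ∑ j, π i j = 1 := by
    have : ∀ i, ∑ j, π i j = r i := hπ.1
    simp only [this]; exact hr.1
  have hmin : ∀ i j, phiMin x y α β U ≤ phi x y α β U i j := by
    intro i j
    exact ciInf_le (Set.Finite.bddBelow (Set.finite_range _)) (i, j)
  have hlow : phiMin x y α β U ≤ ∑ i, ∑ j, π i j * phi x y α β U i j := by
    calc phiMin x y α β U = ∑ i, ∑ j, π i j * phiMin x y α β U := by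
          simp [← Finset.sum_mul, hmass]
      _ ≤ _ := by
          refine Finset.sum_le_sum fun i _ => Finset.sum_le_sum fun j _ => ?_
          exact mul_le_mul_of_nonneg_left (hmin i j) (hπ.2.2 i j)
  have hrhs : ∑ i, ∑ j, πt i j * (phi x y α β U i j - phiMin x y α β U)
      = (∑ i, ∑ j, πt i j * phi x y α β U i j) - phiMin x y α β U := by
    simp only [mul_sub, Finset.sum_sub_distrib]
    congr 1
    simp [← Finset.sum_mul, hmass_t]
  rw [hrhs, hexp πt hπt]
  have := hexp π hπ
  linarith

end PRWPaper
end
end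

section
/- Let r, c ∈ Δ^n, B ∈ ℝ, and let x_1,…,x_n, y_1,…,y_n ∈ ℝ^d, C_ij = ‖x_i − y_j‖². Suppose U ∈ ℝ^{d×k} satisfies U^TU = I_k, and α, β ∈ ℝ^n satisfy: α_i + β_j + ‖U^T(x_i − y_j)‖² ≥ −1 for all i, j ∈ [n], r^Tα = c^Tβ, and r^Tα ≤ B. Then for every i ∈ [n], −1 − ‖C‖_∞ − B ≤ α_i ≤ r_i^{-1}( (1 − r_i)(1 + ‖C‖_∞ + B) + B ), where ‖C‖_∞ = max_{i,j} |C_ij|. -/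
open scoped BigOperators
open Matrix

noncomputable section

namespace PRWPaper

lemma bessel {d k : ℕ} (U : Matrix (Fin d) (Fin k) ℝ) (hU : Uᵀ * U = 1)
    (w : Fin d → ℝ) : projSq U w ≤ sqnorm w := by
  have key : ∀ m m', (∑ l, U l m * U l m') = if m = m' then (1:ℝ) else 0 := by
    intro m m'
    have := congrFun (congrFun hU m) m'
    simpa [Matrix.mul_apply, Matrix.one_apply, Matrix.transpose_apply] using this
  set cc : Fin k → ℝ := fun m => ∑ l, U l m * w l with hcc
  have h0 : (0:ℝ) ≤ ∑ l, (w l - ∑ m, cc m * U l m)^2 :=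
    Finset.sum_nonneg fun l _ => sq_nonneg _
  have e1 : (∑ l, w l * ∑ m, cc m * U l m) = ∑ m, cc m ^ 2 := by
    calc (∑ l, w l * ∑ m, cc m * U l m)
        = ∑ l, ∑ m, cc m * (U l m * w l) := by
          refine Finset.sum_congr rfl fun l _ => ?_
          rw [Finset.mul_sum]
          exact Finset.sum_congr rfl fun m _ => by ring
      _ = ∑ m, cc m * ∑ l, U l m * w l := by
          rw [Finset.sum_comm]
          exact Finset.sum_congr rfl fun m _ => (Finset.mul_sum _ _ _).symm
      _ = ∑ m, cc m ^ 2 := Finset.sum_congr rfl fun m _ => by rw [hcc, pow_two]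
  have e2 : (∑ l, (∑ m, cc m * U l m)^2) = ∑ m, cc m ^ 2 := by
    calc (∑ l, (∑ m, cc m * U l m)^2)
        = ∑ l, ∑ m, ∑ m', cc m * cc m' * (U l m * U l m') := by
          refine Finset.sum_congr rfl fun l _ => ?_
          rw [pow_two, Finset.sum_mul_sum]
          exact Finset.sum_congr rfl fun m _ =>
            Finset.sum_congr rfl fun m' _ => by ring
      _ = ∑ m, ∑ m', cc m * cc m' * ∑ l, U l m * U l m' := by
          rw [Finset.sum_comm]
          refine Finset.sum_congr rfl fun m _ => ?_
          rw [Finset.sum_comm]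
          exact Finset.sum_congr rfl fun m' _ => (Finset.mul_sum _ _ _).symm
      _ = ∑ m, cc m ^ 2 := by
          simp_rw [key, mul_ite, mul_one, mul_zero, Finset.sum_ite_eq,
            Finset.mem_univ, if_true, pow_two]
  have expand : (∑ l, (w l - ∑ m, cc m * U l m)^2) = sqnorm w - ∑ m, cc m ^ 2 := by
    have : ∀ l, (w l - ∑ m, cc m * U l m)^2
        = w l ^ 2 - 2 * (w l * ∑ m, cc m * U l m) + (∑ m, cc m * U l m)^2 := by
      intro l; ring
    simp_rw [this, Finset.sum_add_distrib, Finset.sum_sub_distrib, ← Finset.mul_sum,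
      e1, e2, sqnorm]
    ring
  rw [expand] at h0
  have : projSq U w = ∑ m, cc m ^ 2 := rfl
  linarith

lemma costC_le_CInf {n d : ℕ} (x y : Fin n → Fin d → ℝ) (i j : Fin n) :
    costC x y i j ≤ CInf x y := by
  have h1 : costC x y i j ≤ |costC x y i j| := le_abs_self _
  have h2 : |costC x y i j| ≤ CInf x y :=
    le_ciSup (f := fun p : Fin n × Fin n => |costC x y p.1 p.2|)
      (Set.Finite.bddAbove (Set.finite_range _)) (i, j)
  linarith

lemma costCU_le_CInf {n d k : ℕ} (x y : Fin n → Fin d → ℝ)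
    (U : Matrix (Fin d) (Fin k) ℝ) (hU : Uᵀ * U = 1) (i j : Fin n) :
    costCU x y U i j ≤ CInf x y :=
  le_trans (bessel U hU _) (costC_le_CInf x y i j)

lemma costCU_nonneg {n d k : ℕ} (x y : Fin n → Fin d → ℝ)
    (U : Matrix (Fin d) (Fin k) ℝ) (i j : Fin n) : 0 ≤ costCU x y U i j := by
  unfold costCU projSq
  exact Finset.sum_nonneg fun m _ => sq_nonneg _

/-- boundedness of the dual variable `α` (estimate in Theorem 2.8). -/
theorem statement3 (n d k : ℕ) (hn : 1 ≤ n) (r c : Fin n → ℝ)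
    (hr : inSimplex r) (hc : inSimplex c) (B : ℝ)
    (x y : Fin n → Fin d → ℝ) (U : Matrix (Fin d) (Fin k) ℝ)
    (hU : Uᵀ * U = 1) (α β : Fin n → ℝ)
    (h1 : ∀ i j, -1 ≤ α i + β j + costCU x y U i j)
    (h2 : (∑ i, r i * α i) = ∑ j, c j * β j)
    (h3 : (∑ i, r i * α i) ≤ B) :
    ∀ i, -1 - CInf x y - B ≤ α i
      ∧ α i ≤ (r i)⁻¹ * ((1 - r i) * (1 + CInf x y + B) + B) := by
  obtain ⟨hrs, hrp⟩ := hr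
  obtain ⟨hcs, hcp⟩ := hc
  have hne : Nonempty (Fin n) := ⟨⟨0, hn⟩⟩
  have hj : ∃ j, β j ≤ B := by
    by_contra h
    push_neg at h
    have hlt : B < ∑ j, c j * β j := by
      calc B = ∑ j, c j * B := by rw [← Finset.sum_mul, hcs, one_mul]
        _ < ∑ j, c j * β j :=
          Finset.sum_lt_sum_of_nonempty Finset.univ_nonempty fun j _ =>
            mul_lt_mul_of_pos_left (h j) (hcp j)
    rw [h2] at h3
    linarith
  obtain ⟨j₀, hj₀⟩ := hj
  have hlow : ∀ i, -1 - CInf x y - B ≤ α i := fun i => by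
    have hp := h1 i j₀
    have hc1 := costCU_le_CInf x y U hU i j₀
    linarith
  intro i
  refine ⟨hlow i, ?_⟩
  have hsum : r i * α i
      = (∑ i', r i' * α i') - ∑ i' ∈ Finset.univ.erase i, r i' * α i' := by
    rw [← Finset.add_sum_erase _ _ (Finset.mem_univ i)]; ring
  have h1' : (∑ i' ∈ Finset.univ.erase i, r i') = 1 - r i := by
    have := Finset.add_sum_erase Finset.univ r (Finset.mem_univ i)
    rw [hrs] at this
    linarith
  have hrest : (1 - r i) * (-1 - CInf x y - B)
      ≤ ∑ i' ∈ Finset.univ.erase i, r i' * α i' := by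
    calc (1 - r i) * (-1 - CInf x y - B)
        = ∑ i' ∈ Finset.univ.erase i, r i' * (-1 - CInf x y - B) := by
          rw [← Finset.sum_mul, h1']
      _ ≤ ∑ i' ∈ Finset.univ.erase i, r i' * α i' :=
          Finset.sum_le_sum fun i' _ =>
            mul_le_mul_of_nonneg_left (hlow i') (le_of_lt (hrp i'))
  have hflip : (1 - r i) * (1 + CInf x y + B)
      = -((1 - r i) * (-1 - CInf x y - B)) := by ring
  have hkey : r i * α i ≤ (1 - r i) * (1 + CInf x y + B) + B := by
    rw [hsum, hflip]; linarith
  have hri := hrp i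
  calc α i = (r i)⁻¹ * (r i * α i) := by field_simp
    _ ≤ (r i)⁻¹ * ((1 - r i) * (1 + CInf x y + B) + B) :=
      mul_le_mul_of_nonneg_left hkey (inv_nonneg.mpr (le_of_lt hri))

end PRWPaper
end
end

section
/- Let δ_1 > 0, δ_2 > 0, τ̄ > 0, E_low ∈ ℝ. Let {E_t}_{t≥0}, {a_t}_{t≥0}, {b_t}_{t≥0}, {ω_t}_{t≥0}, {τ_t}_{t≥0} be real sequences with a_t ≥ 0, b_t ≥ 0, ω_t ≥ 0, τ_t ≥ τ̄, E_t ≥ E_low for all t, Ω := Σ_{t=0}^∞ ω_t < ∞, and E_{t+1} ≤ E_t − δ_1 τ_t a_t² − δ_2 b_{t+1}² + ω_t for all t ≥ 0. Set Υ = (E_0 + δ_2 b_0² + Ω − E_low)/min{δ_1 τ̄, δ_2}. Then: (i) Σ_{t=0}^T (a_t² + b_t²) ≤ Υ for every T ≥ 0; (ii) a_t → 0 and b_t → 0; (iii) for any ε_1 > 0 and ε_2 > 0 there exists t ≤ ⌈Υ max{ε_1^{-2}, ε_2^{-2}}⌉ with a_t ≤ ε_1 and b_t ≤ ε_2. -/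
open scoped BigOperators
open Matrix

noncomputable section

namespace PRWPaper

/-- abstract convergence/complexity result (Theorem 3.3). -/
theorem statement7 (δ1 δ2 τb Elow : ℝ) (hδ1 : 0 < δ1) (hδ2 : 0 < δ2) (hτb : 0 < τb)
    (E a b ω τ : ℕ → ℝ)
    (ha : ∀ t, 0 ≤ a t) (hb : ∀ t, 0 ≤ b t) (hω : ∀ t, 0 ≤ ω t)
    (hτ : ∀ t, τb ≤ τ t) (hE : ∀ t, Elow ≤ E t)
    (hsum : Summable ω)
    (hdec : ∀ t, E (t + 1) ≤ E t - δ1 * τ t * (a t) ^ 2 - δ2 * (b (t + 1)) ^ 2 + ω t) :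
    (∀ T : ℕ, ∑ t ∈ Finset.range (T + 1), ((a t) ^ 2 + (b t) ^ 2)
        ≤ (E 0 + δ2 * (b 0) ^ 2 + (∑' s, ω s) - Elow) / min (δ1 * τb) δ2)
    ∧ Filter.Tendsto a Filter.atTop (nhds 0)
    ∧ Filter.Tendsto b Filter.atTop (nhds 0)
    ∧ ∀ ε1 ε2 : ℝ, 0 < ε1 → 0 < ε2 →
        ∃ t : ℕ,
          t ≤ Nat.ceil (((E 0 + δ2 * (b 0) ^ 2 + (∑' s, ω s) - Elow) / min (δ1 * τb) δ2)
              * max ((ε1 ^ 2)⁻¹) ((ε2 ^ 2)⁻¹))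
          ∧ a t ≤ ε1 ∧ b t ≤ ε2 := by
  set Ω := ∑' s, ω s with hΩdef
  set Υ := (E 0 + δ2 * (b 0) ^ 2 + Ω - Elow) / min (δ1 * τb) δ2 with hΥdef
  have hm : 0 < min (δ1 * τb) δ2 := lt_min (mul_pos hδ1 hτb) hδ2
  have key1 : ∀ T : ℕ, ∑ t ∈ Finset.range (T + 1),
      (δ1 * τ t * (a t) ^ 2 + δ2 * (b (t + 1)) ^ 2) ≤ E 0 - E (T + 1) + Ω := by
    intro T
    have h1 : ∑ t ∈ Finset.range (T + 1),
        (δ1 * τ t * (a t) ^ 2 + δ2 * (b (t + 1)) ^ 2)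
        ≤ ∑ t ∈ Finset.range (T + 1), ((E t - E (t + 1)) + ω t) := by
      refine Finset.sum_le_sum fun t _ => ?_
      have := hdec t; linarith
    have h2 : ∑ t ∈ Finset.range (T + 1), ((E t - E (t + 1)) + ω t)
        = (E 0 - E (T + 1)) + ∑ t ∈ Finset.range (T + 1), ω t := by
      rw [Finset.sum_add_distrib, Finset.sum_range_sub' E]
    have h3 : ∑ t ∈ Finset.range (T + 1), ω t ≤ Ω :=
      Summable.sum_le_tsum _ (fun i _ => hω i) hsum
    linarith
  have keysum : ∀ T : ℕ, min (δ1 * τb) δ2 * ∑ t ∈ Finset.range (T + 1),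
      ((a t) ^ 2 + (b t) ^ 2) ≤ E 0 + δ2 * (b 0) ^ 2 + Ω - Elow := by
    intro T
    have e1 : min (δ1 * τb) δ2 * ∑ t ∈ Finset.range (T + 1), ((a t) ^ 2 + (b t) ^ 2)
        ≤ ∑ t ∈ Finset.range (T + 1), (δ1 * τb * (a t) ^ 2 + δ2 * (b t) ^ 2) := by
      rw [Finset.mul_sum]
      refine Finset.sum_le_sum fun t _ => ?_
      have h1 : min (δ1 * τb) δ2 ≤ δ1 * τb := min_le_left _ _
      have h2 : min (δ1 * τb) δ2 ≤ δ2 := min_le_right _ _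
      nlinarith [sq_nonneg (a t), sq_nonneg (b t)]
    have e2 : ∑ t ∈ Finset.range (T + 1), (δ1 * τb * (a t) ^ 2 + δ2 * (b t) ^ 2)
        = (∑ t ∈ Finset.range (T + 1), δ1 * τb * (a t) ^ 2) + δ2 * (b 0) ^ 2
          + ∑ t ∈ Finset.range T, δ2 * (b (t + 1)) ^ 2 := by
      rw [Finset.sum_add_distrib, Finset.sum_range_succ' (fun t => δ2 * (b t) ^ 2)]
      ring
    have e3 : ∑ t ∈ Finset.range T, δ2 * (b (t + 1)) ^ 2
        ≤ ∑ t ∈ Finset.range (T + 1), δ2 * (b (t + 1)) ^ 2 := by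
      apply Finset.sum_le_sum_of_subset_of_nonneg (Finset.range_subset_range.2 (Nat.le_succ T))
      intro t _ _; positivity
    have e4 : (∑ t ∈ Finset.range (T + 1), δ1 * τb * (a t) ^ 2)
          + ∑ t ∈ Finset.range (T + 1), δ2 * (b (t + 1)) ^ 2
        ≤ ∑ t ∈ Finset.range (T + 1), (δ1 * τ t * (a t) ^ 2 + δ2 * (b (t + 1)) ^ 2) := by
      rw [← Finset.sum_add_distrib]
      refine Finset.sum_le_sum fun t _ => ?_
      have hnn : 0 ≤ δ1 * (τ t - τb) * (a t) ^ 2 :=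
        mul_nonneg (mul_nonneg hδ1.le (sub_nonneg.2 (hτ t))) (sq_nonneg (a t))
      nlinarith [hnn]
    have h5 := key1 T
    have h6 := hE (T + 1)
    linarith
  have part1 : ∀ T : ℕ, ∑ t ∈ Finset.range (T + 1), ((a t) ^ 2 + (b t) ^ 2) ≤ Υ := by
    intro T
    rw [hΥdef, le_div_iff₀ hm]
    have := keysum T
    linarith
  have hΥ0 : 0 ≤ Υ := by
    have h := part1 0
    simp only [zero_add, Finset.sum_range_one] at h
    have : (0:ℝ) ≤ (a 0) ^ 2 + (b 0) ^ 2 := by positivity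
    linarith
  have hsq : Summable (fun t => (a t) ^ 2 + (b t) ^ 2) := by
    apply summable_of_sum_range_le (c := Υ) (fun t => by positivity)
    intro n
    match n with
    | 0 => simpa using hΥ0
    | (T + 1) => exact part1 T
  have htend0 : Filter.Tendsto (fun t => (a t) ^ 2 + (b t) ^ 2) Filter.atTop (nhds 0) :=
    hsq.tendsto_atTop_zero
  have hsqrt : Filter.Tendsto (fun t => Real.sqrt ((a t) ^ 2 + (b t) ^ 2))
      Filter.atTop (nhds 0) := by
    have := (Real.continuous_sqrt.tendsto 0).comp htend0
    simpa [Function.comp_def] using this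
  have hta : Filter.Tendsto a Filter.atTop (nhds 0) := by
    refine squeeze_zero ha (fun t => ?_) hsqrt
    calc a t = Real.sqrt ((a t) ^ 2) := (Real.sqrt_sq (ha t)).symm
      _ ≤ Real.sqrt ((a t) ^ 2 + (b t) ^ 2) :=
        Real.sqrt_le_sqrt (by nlinarith [sq_nonneg (b t)])
  have htb : Filter.Tendsto b Filter.atTop (nhds 0) := by
    refine squeeze_zero hb (fun t => ?_) hsqrt
    calc b t = Real.sqrt ((b t) ^ 2) := (Real.sqrt_sq (hb t)).symm
      _ ≤ Real.sqrt ((a t) ^ 2 + (b t) ^ 2) :=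
        Real.sqrt_le_sqrt (by nlinarith [sq_nonneg (a t)])
  refine ⟨part1, hta, htb, ?_⟩
  intro ε1 ε2 hε1 hε2
  by_contra hcon
  push_neg at hcon
  set M := max ((ε1 ^ 2)⁻¹) ((ε2 ^ 2)⁻¹) with hMdef
  set N := Nat.ceil (Υ * M) with hNdef
  set μ := min (ε1 ^ 2) (ε2 ^ 2) with hμdef
  have hμ0 : 0 < μ := lt_min (by positivity) (by positivity)
  have hM0 : 0 < M := lt_of_lt_of_le (by positivity) (le_max_left _ _)
  have hμM : μ * M = 1 := by
    rcases le_total ε1 ε2 with h | h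
    · have h2 : ε1 ^ 2 ≤ ε2 ^ 2 := by nlinarith
      have h3 : (ε2 ^ 2)⁻¹ ≤ (ε1 ^ 2)⁻¹ := by
        apply inv_anti₀ (by positivity) h2
      rw [hμdef, hMdef, min_eq_left h2, max_eq_left h3]
      field_simp
    · have h2 : ε2 ^ 2 ≤ ε1 ^ 2 := by nlinarith
      have h3 : (ε1 ^ 2)⁻¹ ≤ (ε2 ^ 2)⁻¹ := by
        apply inv_anti₀ (by positivity) h2
      rw [hμdef, hMdef, min_eq_right h2, max_eq_right h3]
      field_simp
  have hterm : ∀ t ∈ Finset.range (N + 1), μ ≤ (a t) ^ 2 + (b t) ^ 2 := by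
    intro t ht
    have ht' : t ≤ N := Nat.lt_succ_iff.mp (Finset.mem_range.mp ht)
    rcases le_or_gt (a t) ε1 with h | h
    · have hbt := hcon t ht' h
      have h2 : ε2 ^ 2 ≤ (b t) ^ 2 := by nlinarith [hb t]
      have h3 : μ ≤ ε2 ^ 2 := min_le_right _ _
      nlinarith [sq_nonneg (a t)]
    · have h2 : ε1 ^ 2 ≤ (a t) ^ 2 := by nlinarith [ha t]
      have h3 : μ ≤ ε1 ^ 2 := min_le_left _ _
      nlinarith [sq_nonneg (b t)]
  have h1 : ∑ t ∈ Finset.range (N + 1), μ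
      ≤ ∑ t ∈ Finset.range (N + 1), ((a t) ^ 2 + (b t) ^ 2) := Finset.sum_le_sum hterm
  rw [Finset.sum_const, Finset.card_range, nsmul_eq_mul] at h1
  have h2 : ((N : ℝ) + 1) * μ ≤ Υ := by
    have := part1 N
    push_cast at h1
    linarith
  have h3 : ((N : ℝ) + 1) ≤ Υ * M := by
    nlinarith [hM0.le]
  have h4 : Υ * M ≤ (N : ℝ) := by
    rw [hNdef]
    exact Nat.le_ceil _
  linarith


end PRWPaper
end
end

section
/- Let n ≥ 1, r, c ∈ Δ^n, and A ∈ ℝ^{n×n} with A_ij > 0 for all i,j. Let u^{(0)}, v^{(0)} ∈ ℝ^n be entrywise positive, and define the Sinkhorn iterates u^{(ℓ+1)} = r / (A v^{(ℓ)}) and v^{(ℓ+1)} = c / (A^T u^{(ℓ+1)}) (entrywise division). For each ℓ, let π^{(ℓ)} be the matrix with entries u_i^{(ℓ)} A_ij v_j^{(ℓ)} normalized to have total sum 1, and π^{(ℓ+1/2)} the matrix with entries u_i^{(ℓ+1)} A_ij v_j^{(ℓ)} normalized to have total sum 1. Then ‖π^{(0)}1 − r‖₁ + ‖(π^{(0)})^T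 1 − c‖₁ ≥ ‖(π^{(1/2)})^T 1 − c‖₁ ≥ ‖π^{(1)} 1 − r‖₁, and for every ℓ ≥ 1, ‖π^{(ℓ)} 1 − r‖₁ ≥ ‖(π^{(ℓ+1/2)})^T 1 − c‖₁ ≥ ‖π^{(ℓ+1)} 1 − r‖₁. -/
open scoped BigOperators
open Matrix

noncomputable section

namespace PRWPaper

/-- Row-rescaling a nonneg matrix to row sums `r` changes the column residual
by at most the row residual. -/
lemma key_row {n : ℕ} (r c : Fin n → ℝ) (π : Matrix (Fin n) (Fin n) ℝ)
    (lam : Fin n → ℝ) (hpos : ∀ i j, 0 ≤ π i j)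
    (hlam : ∀ i, lam i * (∑ j, π i j) = r i) :
    colRes c (fun i j => lam i * π i j) ≤ rowRes r π + colRes c π := by
  unfold colRes rowRes
  have e : ∀ j, (∑ i, lam i * π i j) - c j
      = (∑ i, (lam i - 1) * π i j) + ((∑ i, π i j) - c j) := by
    intro j
    have h : ∑ i, (lam i - 1) * π i j = (∑ i, lam i * π i j) - ∑ i, π i j := by
      rw [← Finset.sum_sub_distrib]
      exact Finset.sum_congr rfl fun i _ => by ring
    rw [h]; ring
  calc ∑ j, |(∑ i, lam i * π i j) - c j|
      ≤ ∑ j, ((∑ i, |lam i - 1| * π i j) + |(∑ i, π i j) - c j|) := by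
        refine Finset.sum_le_sum fun j _ => ?_
        rw [e j]
        refine (abs_add_le _ _).trans (add_le_add_left ?_ _)
        refine (Finset.abs_sum_le_sum_abs _ _).trans (le_of_eq ?_)
        exact Finset.sum_congr rfl fun i _ => by
          rw [abs_mul, abs_of_nonneg (hpos i j)]
    _ = (∑ i, |(∑ j, π i j) - r i|) + ∑ j, |(∑ i, π i j) - c j| := by
        rw [Finset.sum_add_distrib]
        congr 1
        rw [Finset.sum_comm]
        refine Finset.sum_congr rfl fun i _ => ?_
        have hρ : (0:ℝ) ≤ ∑ j, π i j := Finset.sum_nonneg fun j _ => hpos i j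
        rw [← Finset.mul_sum, ← abs_of_nonneg hρ, ← abs_mul, sub_mul, one_mul,
          abs_of_nonneg hρ, hlam i, abs_sub_comm]

/-- Column-rescaling a nonneg matrix to column sums `c` changes the row residual
by at most the column residual. -/
lemma key_col {n : ℕ} (r c : Fin n → ℝ) (π : Matrix (Fin n) (Fin n) ℝ)
    (mu : Fin n → ℝ) (hpos : ∀ i j, 0 ≤ π i j)
    (hmu : ∀ j, mu j * (∑ i, π i j) = c j) :
    rowRes r (fun i j => mu j * π i j) ≤ colRes c π + rowRes r π := by
  unfold colRes rowRes
  have e : ∀ i, (∑ j, mu j * π i j) - r i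
      = (∑ j, (mu j - 1) * π i j) + ((∑ j, π i j) - r i) := by
    intro i
    have h : ∑ j, (mu j - 1) * π i j = (∑ j, mu j * π i j) - ∑ j, π i j := by
      rw [← Finset.sum_sub_distrib]
      exact Finset.sum_congr rfl fun j _ => by ring
    rw [h]; ring
  calc ∑ i, |(∑ j, mu j * π i j) - r i|
      ≤ ∑ i, ((∑ j, |mu j - 1| * π i j) + |(∑ j, π i j) - r i|) := by
        refine Finset.sum_le_sum fun i _ => ?_
        rw [e i]
        refine (abs_add_le _ _).trans (add_le_add_left ?_ _)
        refine (Finset.abs_sum_le_sum_abs _ _).trans (le_of_eq ?_)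
        exact Finset.sum_congr rfl fun j _ => by
          rw [abs_mul, abs_of_nonneg (hpos i j)]
    _ = (∑ j, |(∑ i, π i j) - c j|) + ∑ i, |(∑ j, π i j) - r i| := by
        rw [Finset.sum_add_distrib]
        congr 1
        rw [Finset.sum_comm]
        refine Finset.sum_congr rfl fun j _ => ?_
        have hρ : (0:ℝ) ≤ ∑ i, π i j := Finset.sum_nonneg fun i _ => hpos i j
        rw [← Finset.mul_sum, ← abs_of_nonneg hρ, ← abs_mul, sub_mul, one_mul,
          abs_of_nonneg hρ, hmu j, abs_sub_comm]

/-- Lemma 4.1: monotonicity of the `ℓ₁` feasibility residuals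
along the Sinkhorn iteration `u^{(ℓ+1)} = r / (A v^{(ℓ)})`,
`v^{(ℓ+1)} = c / (Aᵀ u^{(ℓ+1)})`. -/
theorem statement8 (n : ℕ) (hn : 1 ≤ n) (r c : Fin n → ℝ)
    (hr : inSimplex r) (hc : inSimplex c)
    (A : Matrix (Fin n) (Fin n) ℝ) (hA : ∀ i j, 0 < A i j)
    (u v : ℕ → Fin n → ℝ)
    (hu0 : ∀ i, 0 < u 0 i) (hv0 : ∀ j, 0 < v 0 j)
    (hu : ∀ (ℓ : ℕ) (i : Fin n), u (ℓ + 1) i = r i / (∑ j, A i j * v ℓ j))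
    (hv : ∀ (ℓ : ℕ) (j : Fin n), v (ℓ + 1) j = c j / (∑ i, A i j * u (ℓ + 1) i)) :
    (colRes c (sinkMat A (u 1) (v 0))
        ≤ rowRes r (sinkMat A (u 0) (v 0)) + colRes c (sinkMat A (u 0) (v 0)))
    ∧ (rowRes r (sinkMat A (u 1) (v 1)) ≤ colRes c (sinkMat A (u 1) (v 0)))
    ∧ ∀ ℓ : ℕ, 1 ≤ ℓ →
        colRes c (sinkMat A (u (ℓ + 1)) (v ℓ)) ≤ rowRes r (sinkMat A (u ℓ) (v ℓ))
        ∧ rowRes r (sinkMat A (u (ℓ + 1)) (v (ℓ + 1)))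
            ≤ colRes c (sinkMat A (u (ℓ + 1)) (v ℓ)) := by
  haveI : Nonempty (Fin n) := Fin.pos_iff_nonempty.mp hn
  -- positivity of all iterates
  have hpos : ∀ ℓ, (∀ i, 0 < u ℓ i) ∧ (∀ j, 0 < v ℓ j) := by
    intro ℓ
    induction ℓ with
    | zero => exact ⟨hu0, hv0⟩
    | succ m ih =>
      have hAv : ∀ i, 0 < ∑ j, A i j * v m j := fun i =>
        Finset.sum_pos (fun j _ => mul_pos (hA i j) (ih.2 j)) Finset.univ_nonempty
      have hum : ∀ i, 0 < u (m + 1) i := fun i => by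
        rw [hu]; exact div_pos (hr.2 i) (hAv i)
      have hAu : ∀ j, 0 < ∑ i, A i j * u (m + 1) i := fun j =>
        Finset.sum_pos (fun i _ => mul_pos (hA i j) (hum i)) Finset.univ_nonempty
      exact ⟨hum, fun j => by rw [hv]; exact div_pos (hc.2 j) (hAu j)⟩
  have hAv : ∀ ℓ i, 0 < ∑ j, A i j * v ℓ j := fun ℓ i =>
    Finset.sum_pos (fun j _ => mul_pos (hA i j) ((hpos ℓ).2 j)) Finset.univ_nonempty
  have hAu : ∀ ℓ j, 0 < ∑ i, A i j * u ℓ i := fun ℓ j =>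
    Finset.sum_pos (fun i _ => mul_pos (hA i j) ((hpos ℓ).1 i)) Finset.univ_nonempty
  have huAv : ∀ ℓ i, u (ℓ + 1) i * (∑ j, A i j * v ℓ j) = r i := fun ℓ i => by
    rw [hu]; exact div_mul_cancel₀ _ (hAv ℓ i).ne'
  have hvAu : ∀ ℓ j, v (ℓ + 1) j * (∑ i, A i j * u (ℓ + 1) i) = c j := fun ℓ j => by
    rw [hv]; exact div_mul_cancel₀ _ (hAu (ℓ + 1) j).ne'
  -- row sums of the half-step unnormalized matrices equal r
  have hrowsum : ∀ ℓ i, ∑ j, u (ℓ + 1) i * A i j * v ℓ j = r i := by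
    intro ℓ i
    calc ∑ j, u (ℓ + 1) i * A i j * v ℓ j
        = u (ℓ + 1) i * ∑ j, A i j * v ℓ j := by
          rw [Finset.mul_sum]; exact Finset.sum_congr rfl fun j _ => by ring
      _ = r i := huAv ℓ i
  -- column sums of the full-step unnormalized matrices equal c
  have hcolsum : ∀ ℓ j, ∑ i, u (ℓ + 1) i * A i j * v (ℓ + 1) j = c j := by
    intro ℓ j
    calc ∑ i, u (ℓ + 1) i * A i j * v (ℓ + 1) j
        = v (ℓ + 1) j * ∑ i, A i j * u (ℓ + 1) i := by
          rw [Finset.mul_sum]; exact Finset.sum_congr rfl fun i _ => by ring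
      _ = c j := hvAu ℓ j
  -- total masses equal 1
  have hThalf : ∀ ℓ, (∑ i, ∑ j, u (ℓ + 1) i * A i j * v ℓ j) = 1 := by
    intro ℓ
    simp only [hrowsum ℓ]; exact hr.1
  have hTfull : ∀ ℓ, (∑ i, ∑ j, u (ℓ + 1) i * A i j * v (ℓ + 1) j) = 1 := by
    intro ℓ
    rw [Finset.sum_comm]; simp only [hcolsum ℓ]; exact hc.1
  -- entries of half / full step plans
  have hhalf : ∀ ℓ i j, sinkMat A (u (ℓ + 1)) (v ℓ) i j
      = u (ℓ + 1) i * A i j * v ℓ j := by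
    intro ℓ i j; simp [sinkMat, hThalf ℓ]
  have hfull : ∀ ℓ i j, sinkMat A (u (ℓ + 1)) (v (ℓ + 1)) i j
      = u (ℓ + 1) i * A i j * v (ℓ + 1) j := by
    intro ℓ i j; simp [sinkMat, hTfull ℓ]
  -- exact residuals vanish
  have hrow0 : ∀ ℓ, rowRes r (sinkMat A (u (ℓ + 1)) (v ℓ)) = 0 := by
    intro ℓ
    unfold rowRes
    refine Finset.sum_eq_zero fun i _ => ?_
    simp only [hhalf ℓ, hrowsum ℓ i, sub_self, abs_zero]
  have hcol0 : ∀ ℓ, colRes c (sinkMat A (u (ℓ + 1)) (v (ℓ + 1))) = 0 := by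
    intro ℓ
    unfold colRes
    refine Finset.sum_eq_zero fun j _ => ?_
    simp only [hfull ℓ, hcolsum ℓ j, sub_self, abs_zero]
  -- step 1: full(ℓ) → half(ℓ) by row rescaling
  have step1 : ∀ ℓ, colRes c (sinkMat A (u (ℓ + 1)) (v ℓ))
      ≤ rowRes r (sinkMat A (u ℓ) (v ℓ)) + colRes c (sinkMat A (u ℓ) (v ℓ)) := by
    intro ℓ
    set T := ∑ i, ∑ j, u ℓ i * A i j * v ℓ j with hTdef
    have hTpos : 0 < T :=
      Finset.sum_pos (fun i _ => Finset.sum_pos (fun j _ =>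
        mul_pos (mul_pos ((hpos ℓ).1 i) (hA i j)) ((hpos ℓ).2 j)) Finset.univ_nonempty)
        Finset.univ_nonempty
    set lam : Fin n → ℝ := fun i => u (ℓ + 1) i * T / u ℓ i with hlamdef
    have hmat : sinkMat A (u (ℓ + 1)) (v ℓ)
        = fun i j => lam i * sinkMat A (u ℓ) (v ℓ) i j := by
      funext i j
      rw [hhalf ℓ]
      simp only [sinkMat, hlamdef, ← hTdef]
      have h : u (ℓ + 1) i * T / u ℓ i * (u ℓ i * A i j * v ℓ j / T)
          = u (ℓ + 1) i * A i j * v ℓ j * (T / T) * (u ℓ i / u ℓ i) := by ring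
      rw [h, div_self hTpos.ne', div_self ((hpos ℓ).1 i).ne', mul_one, mul_one]
    rw [hmat]
    refine key_row r c _ lam (fun i j => ?_) (fun i => ?_)
    · exact div_nonneg (mul_nonneg (mul_nonneg ((hpos ℓ).1 i).le (hA i j).le)
        ((hpos ℓ).2 j).le) hTpos.le
    · have hs : ∑ j, sinkMat A (u ℓ) (v ℓ) i j
          = u ℓ i * (∑ j, A i j * v ℓ j) / T := by
        simp only [sinkMat, ← hTdef, ← Finset.sum_div, Finset.mul_sum]
        congr 1
        exact Finset.sum_congr rfl fun j _ => by ring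
      rw [hs, hlamdef]
      have h : u (ℓ + 1) i * T / u ℓ i * (u ℓ i * (∑ j, A i j * v ℓ j) / T)
          = u (ℓ + 1) i * (∑ j, A i j * v ℓ j) * (T / T) * (u ℓ i / u ℓ i) := by ring
      rw [h, div_self hTpos.ne', div_self ((hpos ℓ).1 i).ne', mul_one, mul_one]
      exact huAv ℓ i
  -- step 2: half(ℓ) → full(ℓ+1) by column rescaling
  have step2 : ∀ ℓ, rowRes r (sinkMat A (u (ℓ + 1)) (v (ℓ + 1)))
      ≤ colRes c (sinkMat A (u (ℓ + 1)) (v ℓ)) := by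
    intro ℓ
    set mu : Fin n → ℝ := fun j => v (ℓ + 1) j / v ℓ j with hmudef
    have hmat : sinkMat A (u (ℓ + 1)) (v (ℓ + 1))
        = fun i j => mu j * sinkMat A (u (ℓ + 1)) (v ℓ) i j := by
      funext i j
      rw [hfull ℓ]
      simp only [hhalf ℓ, hmudef]
      have h : v (ℓ + 1) j / v ℓ j * (u (ℓ + 1) i * A i j * v ℓ j)
          = u (ℓ + 1) i * A i j * v (ℓ + 1) j * (v ℓ j / v ℓ j) := by ring
      rw [h, div_self ((hpos ℓ).2 j).ne', mul_one]
    have h := key_col r c (sinkMat A (u (ℓ + 1)) (v ℓ)) mu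
      (fun i j => by
        rw [hhalf ℓ]
        exact mul_nonneg (mul_nonneg ((hpos (ℓ + 1)).1 i).le (hA i j).le)
          ((hpos ℓ).2 j).le)
      (fun j => by
        have hs : ∑ i, sinkMat A (u (ℓ + 1)) (v ℓ) i j
            = v ℓ j * ∑ i, A i j * u (ℓ + 1) i := by
          simp only [hhalf ℓ, Finset.mul_sum]
          exact Finset.sum_congr rfl fun i _ => by ring
        rw [hs, hmudef]
        have h : v (ℓ + 1) j / v ℓ j * (v ℓ j * ∑ i, A i j * u (ℓ + 1) i)
            = v (ℓ + 1) j * (∑ i, A i j * u (ℓ + 1) i) * (v ℓ j / v ℓ j) := by ring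
        rw [h, div_self ((hpos ℓ).2 j).ne', mul_one]
        exact hvAu ℓ j)
    rw [hmat]
    calc rowRes r (fun i j => mu j * sinkMat A (u (ℓ + 1)) (v ℓ) i j)
        ≤ colRes c (sinkMat A (u (ℓ + 1)) (v ℓ))
            + rowRes r (sinkMat A (u (ℓ + 1)) (v ℓ)) := h
      _ = colRes c (sinkMat A (u (ℓ + 1)) (v ℓ)) := by rw [hrow0 ℓ, add_zero]
  refine ⟨step1 0, step2 0, fun ℓ hℓ => ?_⟩
  obtain ⟨m, rfl⟩ : ∃ m, ℓ = m + 1 := ⟨ℓ - 1, (Nat.succ_pred_eq_of_pos hℓ).symm⟩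
  refine ⟨?_, step2 (m + 1)⟩
  have := step1 (m + 1)
  rwa [hcol0 m, add_zero] at this

end PRWPaper
end
end

section
/- Let η > 0, κ ∈ ℝ^{n×n} with κ_ij > 0, r, c ∈ Δ^n, α, β ∈ ℝ^n, U ∈ ℝ^{d×k}. Let ζ = ζ_η((α,β,U),κ), π = ζ/‖ζ‖₁, and define α⁺ ∈ ℝ^n by α⁺_i = α_i − η log r_i + η log (ζ1)_i. Then L_η((α⁺,β,U),κ) − L_η((α,β,U),κ) = −η KL(r ‖ π1), where KL(p‖q) = Σ_i p_i log(p_i/q_i); consequently, by Pinsker's inequality, L_η((α⁺,β,U),κ) ≤ L_η((α,β,U),κ) − (η/2)‖π1 − r‖₁². -/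
open scoped BigOperators
open Matrix

noncomputable section

namespace PRWPaper

/-- Key rational lower bound for `log`. -/
lemma key_log (x : ℝ) (hx : 0 < x) :
    (x - 1) * (5 * x + 1) / (2 * x * (x + 2)) ≤ Real.log x := by
  set f : ℝ → ℝ := fun t => Real.log t + (4 * t)⁻¹ + 27 * (4 * (t + 2))⁻¹ - 5/2 with hf
  have hder : ∀ t : ℝ, 0 < t → HasDerivAt f ((t - 1) ^ 3 / (t ^ 2 * (t + 2) ^ 2)) t := by
    intro t ht
    have h1 : HasDerivAt Real.log t⁻¹ t := Real.hasDerivAt_log (ne_of_gt ht)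
    have h2 : HasDerivAt (fun t : ℝ => (4 * t)⁻¹) (-(4 * 1) / (4 * t) ^ 2) t := by
      exact ((hasDerivAt_id t).const_mul (4:ℝ)).inv (by positivity)
    have h3 : HasDerivAt (fun t : ℝ => 27 * (4 * (t + 2))⁻¹)
        (27 * (-(4 * 1) / (4 * (t + 2)) ^ 2)) t := by
      exact (((hasDerivAt_id t).add_const (2:ℝ)).const_mul (4:ℝ)).inv (by positivity)
        |>.const_mul 27
    have h := ((h1.add h2).add h3).sub_const (5/2 : ℝ)
    refine h.congr_deriv ?_
    field_simp
    ring
  have hf1 : f 1 = 0 := by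
    simp only [hf]
    norm_num [Real.log_one]
  have hkey : 0 ≤ f x := by
    rcases le_total 1 x with hx1 | hx1
    · have hmono : MonotoneOn f (Set.Ici (1:ℝ)) := by
        apply monotoneOn_of_hasDerivWithinAt_nonneg (convex_Ici 1)
          (f' := fun t => (t - 1) ^ 3 / (t ^ 2 * (t + 2) ^ 2))
        · intro t ht
          exact ((hder t (lt_of_lt_of_le one_pos ht)).continuousAt).continuousWithinAt
        · intro t ht
          rw [interior_Ici] at ht
          exact (hder t (lt_trans one_pos ht)).hasDerivWithinAt
        · intro t ht
          rw [interior_Ici] at ht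
          have h1t : (1:ℝ) < t := ht
          apply div_nonneg
          · nlinarith [mul_nonneg (sub_nonneg.mpr h1t.le) (sq_nonneg (t - 1))]
          · positivity
      have h := hmono (Set.self_mem_Ici) (Set.mem_Ici.mpr hx1) hx1
      rw [hf1] at h
      linarith
    · have hanti : AntitoneOn f (Set.Ioc (0:ℝ) 1) := by
        apply antitoneOn_of_hasDerivWithinAt_nonpos (convex_Ioc 0 1)
          (f' := fun t => (t - 1) ^ 3 / (t ^ 2 * (t + 2) ^ 2))
        · intro t ht
          exact ((hder t ht.1).continuousAt).continuousWithinAt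
        · intro t ht
          rw [interior_Ioc] at ht
          exact (hder t ht.1).hasDerivWithinAt
        · intro t ht
          rw [interior_Ioc] at ht
          have h1 : t - 1 < 0 := by linarith [ht.2]
          have h2 : (t - 1) ^ 3 ≤ 0 := by
            nlinarith [mul_nonpos_of_nonpos_of_nonneg h1.le (sq_nonneg (t - 1))]
          have h3 : (0:ℝ) < t ^ 2 * (t + 2) ^ 2 := by have := ht.1; positivity
          exact div_nonpos_of_nonpos_of_nonneg h2 h3.le
      have h := hanti (Set.mem_Ioc.mpr ⟨hx, hx1⟩) (Set.mem_Ioc.mpr ⟨one_pos, le_refl 1⟩) hx1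
      rw [hf1] at h
      linarith
  have heq : (x - 1) * (5 * x + 1) / (2 * x * (x + 2)) = Real.log x - f x := by
    simp only [hf]
    field_simp
    ring
  rw [heq]
  linarith

lemma key_ab {a b : ℝ} (ha : 0 < a) (hb : 0 < b) :
    (a - b) + 3 * (a - b) ^ 2 / (2 * (a + 2 * b)) ≤ a * Real.log (a / b) := by
  have hk := key_log (a / b) (by positivity)
  have heq : (a - b) + 3 * (a - b) ^ 2 / (2 * (a + 2 * b))
      = a * ((a / b - 1) * (5 * (a / b) + 1) / (2 * (a / b) * (a / b + 2))) := by
    field_simp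
    ring
  rw [heq]
  exact mul_le_mul_of_nonneg_left hk ha.le

/-- Finite-dimensional Pinsker inequality. -/
lemma pinsker {n : ℕ} (p q : Fin n → ℝ) (hp : ∀ i, 0 < p i) (hq : ∀ i, 0 < q i)
    (hps : ∑ i, p i = 1) (hqs : ∑ i, q i = 1) :
    (∑ i, |q i - p i|) ^ 2 / 2 ≤ ∑ i, p i * Real.log (p i / q i) := by
  have hstep : (3/2 : ℝ) * ∑ i, (p i - q i) ^ 2 / (p i + 2 * q i)
      ≤ ∑ i, p i * Real.log (p i / q i) := by
    have h := Finset.sum_le_sum (fun i (_ : i ∈ Finset.univ) =>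
      key_ab (hp i) (hq i))
    have hsum : ∑ i, ((p i - q i) + 3 * (p i - q i) ^ 2 / (2 * (p i + 2 * q i)))
        = (3/2 : ℝ) * ∑ i, (p i - q i) ^ 2 / (p i + 2 * q i) := by
      rw [Finset.sum_add_distrib, Finset.sum_sub_distrib, hps, hqs, Finset.mul_sum]
      have : ∀ i : Fin n, 3 * (p i - q i) ^ 2 / (2 * (p i + 2 * q i))
          = (3/2 : ℝ) * ((p i - q i) ^ 2 / (p i + 2 * q i)) := by
        intro i
        have : (0:ℝ) < p i + 2 * q i := by have := hp i; have := hq i; linarith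
        field_simp
        try ring
      simp only [this]
      try ring
    calc (3/2 : ℝ) * ∑ i, (p i - q i) ^ 2 / (p i + 2 * q i)
        = ∑ i, ((p i - q i) + 3 * (p i - q i) ^ 2 / (2 * (p i + 2 * q i))) := hsum.symm
      _ ≤ _ := h
  have hCS : (∑ i, |q i - p i|) ^ 2 ≤ 3 * ∑ i, (p i - q i) ^ 2 / (p i + 2 * q i) := by
    have hpos : ∀ i : Fin n, (0:ℝ) < p i + 2 * q i := fun i => by
      have := hp i; have := hq i; linarith
    have h := Finset.sum_mul_sq_le_sq_mul_sq Finset.univ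
      (fun i => |p i - q i| / Real.sqrt (p i + 2 * q i))
      (fun i => Real.sqrt (p i + 2 * q i))
    have e1 : ∀ i : Fin n, |p i - q i| / Real.sqrt (p i + 2 * q i) * Real.sqrt (p i + 2 * q i)
        = |q i - p i| := by
      intro i
      rw [div_mul_cancel₀ _ (Real.sqrt_ne_zero'.mpr (hpos i)), abs_sub_comm]
    have e2 : ∀ i : Fin n, (|p i - q i| / Real.sqrt (p i + 2 * q i)) ^ 2
        = (p i - q i) ^ 2 / (p i + 2 * q i) := by
      intro i
      rw [div_pow, sq_abs, Real.sq_sqrt (hpos i).le]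
    have e3 : ∑ i, (Real.sqrt (p i + 2 * q i)) ^ 2 = 3 := by
      have : ∀ i : Fin n, (Real.sqrt (p i + 2 * q i)) ^ 2 = p i + 2 * q i := fun i =>
        Real.sq_sqrt (hpos i).le
      simp only [this]
      rw [Finset.sum_add_distrib, hps, ← Finset.mul_sum, hqs]
      norm_num
    simp only [e1, e2] at h
    rw [e3] at h
    linarith
  linarith

/-- the `α`-update of the Sinkhorn iteration decreases `L_η` by
`η · KL(r ‖ π 1)`, hence (via Pinsker) by at least `(η/2) ‖π 1 - r‖₁²`. -/
theorem statement9 (n d k : ℕ) (η : ℝ) (hη : 0 < η)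
    (κ : Matrix (Fin n) (Fin n) ℝ) (hκ : ∀ i j, 0 < κ i j)
    (r c : Fin n → ℝ) (hr : inSimplex r) (hc : inSimplex c)
    (x y : Fin n → Fin d → ℝ) (α β : Fin n → ℝ) (U : Matrix (Fin d) (Fin k) ℝ)
    (αp : Fin n → ℝ)
    (hαp : ∀ i, αp i = α i - η * Real.log (r i)
        + η * Real.log (∑ j, zeta η κ x y α β U i j)) :
    Lfun η κ r c x y αp β U - Lfun η κ r c x y α β U
        = -η * ∑ i, r i * Real.log (r i / (∑ j, piEta η κ x y α β U i j))
    ∧ Lfun η κ r c x y αp β U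
        ≤ Lfun η κ r c x y α β U - (η / 2) * (rowRes r (piEta η κ x y α β U)) ^ 2 := by
  obtain ⟨hr1, hrpos⟩ := hr
  have hne : Nonempty (Fin n) := by
    rcases isEmpty_or_nonempty (Fin n) with h | h
    · rw [Finset.univ_eq_empty, Finset.sum_empty] at hr1
      exact absurd hr1 zero_ne_one
    · exact h
  set Z : Matrix (Fin n) (Fin n) ℝ := zeta η κ x y α β U with hZdef
  have hZpos : ∀ i j, 0 < Z i j := fun i j =>
    mul_pos (hκ i j) (Real.exp_pos _)
  have hρpos : ∀ i, 0 < ∑ j, Z i j := fun i =>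
    Finset.sum_pos (fun j _ => hZpos i j) Finset.univ_nonempty
  set S : ℝ := l1norm Z with hSdef
  have hSeq : S = ∑ i, ∑ j, Z i j := by
    rw [hSdef]
    unfold l1norm
    exact Finset.sum_congr rfl fun i _ =>
      Finset.sum_congr rfl fun j _ => abs_of_pos (hZpos i j)
  have hSpos : 0 < S := by
    rw [hSeq]
    exact Finset.sum_pos (fun i _ => hρpos i) Finset.univ_nonempty
  have hq : ∀ i, (∑ j, piEta η κ x y α β U i j) = (∑ j, Z i j) / S := by
    intro i
    simp only [piEta, ← hZdef, ← hSdef]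
    rw [← Finset.sum_div]
  have hqpos : ∀ i, 0 < (∑ j, Z i j) / S := fun i => div_pos (hρpos i) hSpos
  have hqsum : ∑ i, (∑ j, Z i j) / S = 1 := by
    rw [← Finset.sum_div, ← hSeq, div_self (ne_of_gt hSpos)]
  -- the updated zeta
  have hζ' : ∀ i j, zeta η κ x y αp β U i j = Z i j * (r i / ∑ j', Z i j') := by
    intro i j
    have hphi : phi x y αp β U i j = phi x y α β U i j
        + (η * Real.log (∑ j', Z i j') - η * Real.log (r i)) := by
      simp only [phi, hαp i]
      ring
    show κ i j * Real.exp (-(phi x y αp β U i j) / η) = _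
    rw [hphi]
    have he : -(phi x y α β U i j
          + (η * Real.log (∑ j', Z i j') - η * Real.log (r i))) / η
        = -(phi x y α β U i j) / η + (Real.log (r i) - Real.log (∑ j', Z i j')) := by
      field_simp
      ring
    rw [he, Real.exp_add, Real.exp_sub, Real.exp_log (hrpos i), Real.exp_log (hρpos i)]
    show κ i j * (Real.exp (-(phi x y α β U i j) / η) * _) = _
    rw [hZdef]
    show κ i j * _ = κ i j * Real.exp (-(phi x y α β U i j) / η) * _
    rw [div_eq_mul_inv]
    ring
  have hl1' : l1norm (zeta η κ x y αp β U) = 1 := by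
    unfold l1norm
    have habs : ∀ i j, |zeta η κ x y αp β U i j| = Z i j * (r i / ∑ j', Z i j') := by
      intro i j
      rw [hζ' i j, abs_of_pos]
      exact mul_pos (hZpos i j) (div_pos (hrpos i) (hρpos i))
    calc ∑ i, ∑ j, |zeta η κ x y αp β U i j|
        = ∑ i, ∑ j, Z i j * (r i / ∑ j', Z i j') := by
          exact Finset.sum_congr rfl fun i _ => Finset.sum_congr rfl fun j _ => habs i j
      _ = ∑ i, (∑ j, Z i j) * (r i / ∑ j', Z i j') := by
          exact Finset.sum_congr rfl fun i _ => (Finset.sum_mul ..).symm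
      _ = ∑ i, r i := by
          refine Finset.sum_congr rfl fun i _ => ?_
          rw [mul_comm, div_mul_cancel₀ _ (ne_of_gt (hρpos i))]
      _ = 1 := hr1
  have hLp : Lfun η κ r c x y αp β U = (∑ i, r i * αp i) + (∑ j, c j * β j) := by
    unfold Lfun
    rw [hl1', Real.log_one, mul_zero, add_zero]
  have hLa : Lfun η κ r c x y α β U
      = (∑ i, r i * α i) + (∑ j, c j * β j) + η * Real.log S := by
    unfold Lfun
    rw [← hZdef, ← hSdef]
  have hMain : Lfun η κ r c x y αp β U - Lfun η κ r c x y α β U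
      = -η * ∑ i, r i * Real.log (r i / ((∑ j, Z i j) / S)) := by
    have hexp : ∀ i : Fin n, r i * Real.log (r i / ((∑ j, Z i j) / S))
        = r i * Real.log (r i) - r i * Real.log (∑ j, Z i j) + r i * Real.log S := by
      intro i
      rw [Real.log_div (ne_of_gt (hrpos i)) (ne_of_gt (hqpos i)),
        Real.log_div (ne_of_gt (hρpos i)) (ne_of_gt hSpos)]
      ring
    have hsum2 : ∑ i, r i * Real.log (r i / ((∑ j, Z i j) / S))
        = (∑ i, r i * Real.log (r i)) - (∑ i, r i * Real.log (∑ j, Z i j))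
          + Real.log S := by
      simp only [hexp]
      rw [Finset.sum_add_distrib, Finset.sum_sub_distrib, ← Finset.sum_mul, hr1, one_mul]
    have hdiff : (∑ i, r i * αp i) - (∑ i, r i * α i)
        = η * (∑ i, r i * Real.log (∑ j, Z i j)) - η * (∑ i, r i * Real.log (r i)) := by
      rw [Finset.mul_sum, Finset.mul_sum, ← Finset.sum_sub_distrib, ← Finset.sum_sub_distrib]
      refine Finset.sum_congr rfl fun i _ => ?_
      rw [hαp i]
      ring
    rw [hLp, hLa, hsum2]
    linear_combination hdiff
  constructor
  · simp only [hq]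
    exact hMain
  · have hpins := pinsker r (fun i => (∑ j, Z i j) / S) hrpos hqpos hr1 hqsum
    have hres : rowRes r (piEta η κ x y α β U) = ∑ i, |(∑ j, Z i j) / S - r i| := by
      unfold rowRes
      refine Finset.sum_congr rfl fun i _ => ?_
      rw [hq i]
    have hmul := mul_le_mul_of_nonneg_left hpins hη.le
    rw [hres]
    nlinarith [hMain, hmul]

end PRWPaper
end
end

section
/- Let η > 0, κ ∈ ℝ^{n×n} with κ_ij > 0, r, c ∈ Δ^n, U ∈ ℝ^{d×k}, and initial α^{(0)}, β^{(0)} ∈ ℝ^n. Define the Sinkhorn iteration: ζ^{(ℓ)} = ζ_η((α^{(ℓ)}, β^{(ℓ)}, U), κ), α^{(ℓ+1)} = α^{(ℓ)} − η log r + η log(ζ^{(ℓ)}1); ζ^{(ℓ+1/2)} = ζ_η((α^{(ℓ+1)}, β^{(ℓ)}, U), κ), β^{(ℓ+1)} = β^{(ℓ)} − η log c + η log((ζ^{(ℓ+1/2)})^T 1); and set π^{(ℓ)} = ζ^{(ℓ)}/‖ζ^{(ℓ)}‖₁. Then for every ℓ ≥ 0, L_η((α^{(ℓ+1)}, β^{(ℓ+1)},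 U), κ) ≤ L_η((α^{(ℓ)}, β^{(ℓ)}, U), κ) − (η/2)( ‖π^{(ℓ)}1 − r‖₁² + ‖π^{(ℓ+1)}1 − r‖₁² ). -/
open scoped BigOperators
open Matrix

noncomputable section

namespace PRWPaper

/-! ### Auxiliary lemmas for the proof of Lemma 4.2 -/

private noncomputable def auxQ (t : ℝ) : ℝ := Real.log t - (3*(t-1)*(t+5))/(2*(t+2)^2)

private lemma auxQ_deriv {t : ℝ} (ht : 0 < t) :
    HasDerivAt auxQ ((t-1)^2*(t+8)/(t*(t+2)^3)) t := by
  have h2 : (2*(t+2)^2) ≠ 0 := by positivity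
  have hlog : HasDerivAt Real.log t⁻¹ t := Real.hasDerivAt_log ht.ne'
  have hnum : HasDerivAt (fun t : ℝ => 3*(t-1)*(t+5)) (3*(t-1) + 3*(t+5)) t := by
    have := ((hasDerivAt_id t).sub_const 1).const_mul 3 |>.mul ((hasDerivAt_id t).add_const 5)
    convert this using 1
    · rfl
    · rfl
    · funext s; simp only [Pi.mul_apply, id]
    · simp only [id]; ring
  have hden : HasDerivAt (fun t : ℝ => 2*(t+2)^2) (2*(2*(t+2))) t := by
    have := (((hasDerivAt_id t).add_const 2).pow 2).const_mul 2
    simpa [mul_comm, mul_assoc] using this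
  have hq := hlog.sub (hnum.div hden h2)
  convert hq using 1
  · rfl
  · rfl
  · funext s; rfl
  field_simp
  ring

private lemma auxQ_mono : MonotoneOn auxQ (Set.Ioi (0:ℝ)) := by
  have hderiv : ∀ t ∈ interior (Set.Ioi (0:ℝ)), 0 ≤ deriv auxQ t := by
    intro t ht
    rw [interior_Ioi] at ht
    rw [(auxQ_deriv ht).deriv]
    have : (0:ℝ) < t := ht
    positivity
  have hdiff : DifferentiableOn ℝ auxQ (interior (Set.Ioi (0:ℝ))) := by
    intro t ht
    rw [interior_Ioi] at ht
    exact (auxQ_deriv ht).differentiableAt.differentiableWithinAt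
  exact monotoneOn_of_deriv_nonneg (convex_Ioi 0)
    (fun t ht => (auxQ_deriv ht).differentiableAt.continuousAt.continuousWithinAt) hdiff hderiv

private lemma auxQ_one : auxQ 1 = 0 := by simp [auxQ]

private noncomputable def auxH (t : ℝ) : ℝ := t * Real.log t - t + 1 - 3*(t-1)^2/(2*(t+2))

private lemma auxH_deriv {t : ℝ} (ht : 0 < t) : HasDerivAt auxH (auxQ t) t := by
  have h2 : (2*(t+2)) ≠ 0 := by positivity
  have hlog : HasDerivAt (fun t : ℝ => t * Real.log t) (Real.log t + 1) t := by
    have := (hasDerivAt_id t).mul (Real.hasDerivAt_log ht.ne')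
    convert this using 1
    · rfl
    · rfl
    · funext s; rfl
    · simp [mul_inv_cancel₀ ht.ne', add_comm]
  have hnum : HasDerivAt (fun t : ℝ => 3*(t-1)^2) (3*(2*(t-1))) t := by
    have := (((hasDerivAt_id t).sub_const 1).pow 2).const_mul 3
    simpa [mul_comm, mul_assoc] using this
  have hden : HasDerivAt (fun t : ℝ => 2*(t+2)) 2 t := by
    simpa using ((hasDerivAt_id t).add_const 2).const_mul 2
  have h := ((hlog.sub (hasDerivAt_id t)).add_const 1).sub (hnum.div hden h2)
  convert h using 1
  · rfl
  · rfl
  · funext s; rfl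
  unfold auxQ
  field_simp
  ring

private lemma auxH_nonneg {t : ℝ} (ht : 0 < t) : 0 ≤ auxH t := by
  rcases le_or_gt 1 t with h1 | h1
  · have hmono : MonotoneOn auxH (Set.Ici (1:ℝ)) := by
      apply monotoneOn_of_deriv_nonneg (convex_Ici 1)
      · intro s hs
        have hs0 : (0:ℝ) < s := lt_of_lt_of_le one_pos hs
        exact (auxH_deriv hs0).differentiableAt.continuousAt.continuousWithinAt
      · intro s hs
        rw [interior_Ici] at hs
        exact (auxH_deriv (lt_trans one_pos hs)).differentiableAt.differentiableWithinAt
      · intro s hs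
        rw [interior_Ici] at hs
        have hs0 : (0:ℝ) < s := lt_trans one_pos hs
        rw [(auxH_deriv hs0).deriv]
        have := auxQ_mono (Set.mem_Ioi.mpr one_pos) (Set.mem_Ioi.mpr hs0) hs.le
        rwa [auxQ_one] at this
    have h0 : auxH 1 = 0 := by norm_num [auxH]
    have := hmono (Set.mem_Ici.mpr le_rfl) (Set.mem_Ici.mpr h1) h1
    linarith
  · have hanti : AntitoneOn auxH (Set.Ioc (0:ℝ) 1) := by
      apply antitoneOn_of_deriv_nonpos (convex_Ioc 0 1)
      · intro s hs
        exact (auxH_deriv hs.1).differentiableAt.continuousAt.continuousWithinAt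
      · intro s hs
        rw [interior_Ioc] at hs
        exact (auxH_deriv hs.1).differentiableAt.differentiableWithinAt
      · intro s hs
        rw [interior_Ioc] at hs
        rw [(auxH_deriv hs.1).deriv]
        have := auxQ_mono (Set.mem_Ioi.mpr hs.1) (Set.mem_Ioi.mpr one_pos) hs.2.le
        rwa [auxQ_one] at this
    have h0 : auxH 1 = 0 := by norm_num [auxH]
    have := hanti (Set.mem_Ioc.mpr ⟨ht, h1.le⟩) (Set.mem_Ioc.mpr ⟨one_pos, le_rfl⟩) h1.le
    linarith

private lemma aux_key_ab {a b : ℝ} (ha : 0 < a) (hb : 0 < b) :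
    3*(a-b)^2/(2*(a+2*b)) ≤ a * Real.log (a/b) + b - a := by
  have ht : 0 < a/b := div_pos ha hb
  have h : 3*(a/b-1)^2/(2*(a/b+2)) ≤ a/b * Real.log (a/b) - a/b + 1 := by
    have := auxH_nonneg ht; unfold auxH at this; linarith
  have h2 : b * (3*(a/b-1)^2/(2*(a/b+2))) = 3*(a-b)^2/(2*(a+2*b)) := by
    field_simp
  have h3 : b * (a/b * Real.log (a/b) - a/b + 1) = a * Real.log (a/b) + b - a := by
    field_simp; ring
  nlinarith [mul_le_mul_of_nonneg_left h hb.le]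

private lemma aux_pinsker {n : ℕ} (p q : Fin n → ℝ) (hp : ∀ i, 0 < p i) (hq : ∀ i, 0 < q i)
    (sp : ∑ i, p i = 1) (sq : ∑ i, q i = 1) :
    (1/2) * (∑ i, |p i - q i|)^2 ≤ ∑ i, p i * Real.log (p i / q i) := by
  set d : Fin n → ℝ := fun i => 2*(p i + 2*q i)/3 with hd
  have hdpos : ∀ i, 0 < d i := fun i => by have := hp i; have := hq i; positivity
  have hsumd : ∑ i, d i = 2 := by
    simp only [hd]
    rw [← Finset.sum_div, ← Finset.mul_sum]
    rw [Finset.sum_add_distrib, sp, ← Finset.mul_sum, sq]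
    norm_num
  have hcs := Finset.sum_mul_sq_le_sq_mul_sq Finset.univ
    (fun i => |p i - q i| / Real.sqrt (d i)) (fun i => Real.sqrt (d i))
  have h1 : ∀ i : Fin n, |p i - q i| / Real.sqrt (d i) * Real.sqrt (d i) = |p i - q i| := by
    intro i
    rw [div_mul_cancel₀]
    exact (Real.sqrt_pos.mpr (hdpos i)).ne'
  have h2 : ∀ i : Fin n, (|p i - q i| / Real.sqrt (d i))^2 = (p i - q i)^2 / d i := by
    intro i
    rw [div_pow, Real.sq_sqrt (hdpos i).le, sq_abs]
  have h3 : ∀ i : Fin n, (Real.sqrt (d i))^2 = d i := fun i => Real.sq_sqrt (hdpos i).le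
  simp only [h1, h2, h3] at hcs
  rw [hsumd] at hcs
  have hpt : ∀ i : Fin n, (p i - q i)^2 / d i ≤ p i * Real.log (p i / q i) + q i - p i := by
    intro i
    have := aux_key_ab (hp i) (hq i)
    have he : 3*(p i - q i)^2/(2*(p i + 2*q i)) = (p i - q i)^2 / d i := by
      rw [hd]; have := hp i; have := hq i; field_simp
    linarith
  have hsum : ∑ i, (p i - q i)^2 / d i ≤ ∑ i, p i * Real.log (p i / q i) := by
    calc ∑ i, (p i - q i)^2 / d i ≤ ∑ i, (p i * Real.log (p i / q i) + q i - p i) :=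
          Finset.sum_le_sum (fun i _ => hpt i)
      _ = ∑ i, p i * Real.log (p i / q i) := by
          simp only [Finset.sum_sub_distrib, Finset.sum_add_distrib, sp, sq]; ring
  nlinarith

/-- Lemma 4.2: sufficient decrease of `L_η` in `(α, β)` under the
Sinkhorn iteration. -/
theorem statement10 (n d k : ℕ) (η : ℝ) (hη : 0 < η)
    (κ : Matrix (Fin n) (Fin n) ℝ) (hκ : ∀ i j, 0 < κ i j)
    (r c : Fin n → ℝ) (hr : inSimplex r) (hc : inSimplex c)
    (x y : Fin n → Fin d → ℝ) (U : Matrix (Fin d) (Fin k) ℝ)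
    (α β : ℕ → Fin n → ℝ)
    (hα : ∀ (ℓ : ℕ) (i : Fin n), α (ℓ + 1) i = α ℓ i - η * Real.log (r i)
        + η * Real.log (∑ j, zeta η κ x y (α ℓ) (β ℓ) U i j))
    (hβ : ∀ (ℓ : ℕ) (j : Fin n), β (ℓ + 1) j = β ℓ j - η * Real.log (c j)
        + η * Real.log (∑ i, zeta η κ x y (α (ℓ + 1)) (β ℓ) U i j)) :
    ∀ ℓ : ℕ, Lfun η κ r c x y (α (ℓ + 1)) (β (ℓ + 1)) U
      ≤ Lfun η κ r c x y (α ℓ) (β ℓ) U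
        - (η / 2) * ((rowRes r (piEta η κ x y (α ℓ) (β ℓ) U)) ^ 2
            + (rowRes r (piEta η κ x y (α (ℓ + 1)) (β (ℓ + 1)) U)) ^ 2) := by
  intro ℓ
  have hn : Nonempty (Fin n) := by
    cases n with
    | zero => exfalso; simpa using hr.1
    | succ m => exact ⟨0⟩
  -- positivity of all ζ entries
  have hzpos : ∀ (a b : Fin n → ℝ) (i j : Fin n), 0 < zeta η κ x y a b U i j :=
    fun a b i j => mul_pos (hκ i j) (Real.exp_pos _)
  -- row sums of ζ at step ℓ
  set S : Fin n → ℝ := fun i => ∑ j, zeta η κ x y (α ℓ) (β ℓ) U i j with hSdef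
  set Z : ℝ := ∑ i, S i with hZdef
  have hSpos : ∀ i, 0 < S i := fun i => Finset.sum_pos (fun j _ => hzpos _ _ i j) Finset.univ_nonempty
  have hZpos : 0 < Z := Finset.sum_pos (fun i _ => hSpos i) Finset.univ_nonempty
  have hα' : ∀ i, α (ℓ+1) i = α ℓ i - η * Real.log (r i) + η * Real.log (S i) :=
    fun i => hα ℓ i
  -- half-step ζ is a row rescaling
  have hζ1 : ∀ i j, zeta η κ x y (α (ℓ+1)) (β ℓ) U i j
      = zeta η κ x y (α ℓ) (β ℓ) U i j * (r i / S i) := by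
    intro i j
    simp only [zeta, phi]
    rw [hα' i]
    have harg : -(α ℓ i - η*Real.log (r i) + η*Real.log (S i) + β ℓ j + costCU x y U i j)/η
        = -(α ℓ i + β ℓ j + costCU x y U i j)/η + (Real.log (r i) - Real.log (S i)) := by
      field_simp; ring
    rw [harg, Real.exp_add, Real.exp_sub, Real.exp_log (hr.2 i), Real.exp_log (hSpos i)]
    ring
  have hrow1 : ∀ i, ∑ j, zeta η κ x y (α (ℓ+1)) (β ℓ) U i j = r i := by
    intro i
    rw [Finset.sum_congr rfl (fun j _ => hζ1 i j), ← Finset.sum_mul]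
    have hs : (∑ j, zeta η κ x y (α ℓ) (β ℓ) U i j) = S i := rfl
    rw [hs, mul_div_cancel₀ _ (hSpos i).ne']
  -- column sums of the half-step ζ
  set T : Fin n → ℝ := fun j => ∑ i, zeta η κ x y (α (ℓ+1)) (β ℓ) U i j with hTdef
  have hTpos : ∀ j, 0 < T j := fun j => Finset.sum_pos (fun i _ => hzpos _ _ i j) Finset.univ_nonempty
  have hβ' : ∀ j, β (ℓ+1) j = β ℓ j - η * Real.log (c j) + η * Real.log (T j) :=
    fun j => hβ ℓ j
  have hsum1 : ∑ i, ∑ j, zeta η κ x y (α (ℓ+1)) (β ℓ) U i j = 1 := by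
    rw [Finset.sum_congr rfl (fun i _ => hrow1 i), hr.1]
  have hTsum : ∑ j, T j = 1 := by
    calc ∑ j, T j = ∑ j, ∑ i, zeta η κ x y (α (ℓ+1)) (β ℓ) U i j := rfl
      _ = ∑ i, ∑ j, zeta η κ x y (α (ℓ+1)) (β ℓ) U i j := Finset.sum_comm
      _ = 1 := hsum1
  -- full-step ζ is a column rescaling of the half-step ζ
  have hζ2 : ∀ i j, zeta η κ x y (α (ℓ+1)) (β (ℓ+1)) U i j
      = zeta η κ x y (α (ℓ+1)) (β ℓ) U i j * (c j / T j) := by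
    intro i j
    simp only [zeta, phi]
    rw [hβ' j]
    have harg : -(α (ℓ+1) i + (β ℓ j - η*Real.log (c j) + η*Real.log (T j)) + costCU x y U i j)/η
        = -(α (ℓ+1) i + β ℓ j + costCU x y U i j)/η + (Real.log (c j) - Real.log (T j)) := by
      field_simp; ring
    rw [harg, Real.exp_add, Real.exp_sub, Real.exp_log (hc.2 j), Real.exp_log (hTpos j)]
    ring
  have hcol2 : ∀ j, ∑ i, zeta η κ x y (α (ℓ+1)) (β (ℓ+1)) U i j = c j := by
    intro j
    rw [Finset.sum_congr rfl (fun i _ => hζ2 i j), ← Finset.sum_mul]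
    have hs : (∑ i, zeta η κ x y (α (ℓ+1)) (β ℓ) U i j) = T j := rfl
    rw [hs, mul_div_cancel₀ _ (hTpos j).ne']
  have hsum2 : ∑ i, ∑ j, zeta η κ x y (α (ℓ+1)) (β (ℓ+1)) U i j = 1 := by
    rw [show ∑ i, ∑ j, zeta η κ x y (α (ℓ+1)) (β (ℓ+1)) U i j
        = ∑ j, ∑ i, zeta η κ x y (α (ℓ+1)) (β (ℓ+1)) U i j from Finset.sum_comm,
      Finset.sum_congr rfl (fun j _ => hcol2 j), hc.1]
  -- ℓ¹ norms have no absolute values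
  have hl1norm : ∀ (a b : Fin n → ℝ), l1norm (zeta η κ x y a b U)
      = ∑ i, ∑ j, zeta η κ x y a b U i j := by
    intro a b
    unfold l1norm
    exact Finset.sum_congr rfl (fun i _ =>
      Finset.sum_congr rfl (fun j _ => abs_of_pos (hzpos a b i j)))
  -- value of L at step ℓ
  have hL0 : Lfun η κ r c x y (α ℓ) (β ℓ) U
      = (∑ i, r i * α ℓ i) + (∑ j, c j * β ℓ j) + η * Real.log Z := by
    unfold Lfun
    rw [hl1norm]
  have hL2 : Lfun η κ r c x y (α (ℓ+1)) (β (ℓ+1)) U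
      = (∑ i, r i * α (ℓ+1) i) + (∑ j, c j * β (ℓ+1) j) := by
    unfold Lfun
    rw [hl1norm, hsum2, Real.log_one, mul_zero, add_zero]
  -- the α-step decreases L by η · KL(r ‖ S/Z)
  have e1 : ∑ i, r i * α (ℓ+1) i
      = ∑ i, r i * α ℓ i - η * (∑ i, r i * Real.log (r i / (S i / Z))) + η * Real.log Z := by
    have hpt : ∀ i : Fin n, r i * α (ℓ+1) i
        = r i * α ℓ i - η * (r i * Real.log (r i / (S i / Z))) + (η * Real.log Z) * r i := by
      intro i
      rw [hα' i, Real.log_div (hr.2 i).ne' (div_pos (hSpos i) hZpos).ne',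
        Real.log_div (hSpos i).ne' hZpos.ne']
      ring
    rw [Finset.sum_congr rfl (fun i _ => hpt i), Finset.sum_add_distrib,
      Finset.sum_sub_distrib, ← Finset.mul_sum, ← Finset.mul_sum, hr.1, mul_one]
  -- the β-step decreases L by η · KL(c ‖ T)
  have e2 : ∑ j, c j * β (ℓ+1) j
      = ∑ j, c j * β ℓ j - η * (∑ j, c j * Real.log (c j / T j)) := by
    have hpt : ∀ j : Fin n, c j * β (ℓ+1) j
        = c j * β ℓ j - η * (c j * Real.log (c j / T j)) := by
      intro j
      rw [hβ' j, Real.log_div (hc.2 j).ne' (hTpos j).ne']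
      ring
    rw [Finset.sum_congr rfl (fun j _ => hpt j), Finset.sum_sub_distrib, ← Finset.mul_sum]
  -- Pinsker for the first KL term
  have hq1pos : ∀ i, 0 < S i / Z := fun i => div_pos (hSpos i) hZpos
  have hq1sum : ∑ i, S i / Z = 1 := by
    rw [← Finset.sum_div, ← hZdef, div_self hZpos.ne']
  have hp1 := aux_pinsker r (fun i => S i / Z) hr.2 hq1pos hr.1 hq1sum
  -- Pinsker for the second KL term
  have hp2 := aux_pinsker c T hc.2 hTpos hc.1 hTsum
  -- row residual at step ℓ
  have hA : rowRes r (piEta η κ x y (α ℓ) (β ℓ) U) = ∑ i, |r i - S i / Z| := by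
    unfold rowRes piEta
    simp only [hl1norm]
    refine Finset.sum_congr rfl (fun i _ => ?_)
    rw [← Finset.sum_div, abs_sub_comm]
  -- row residual at step ℓ+1 is at most the column residual of the half step
  have hBle : rowRes r (piEta η κ x y (α (ℓ+1)) (β (ℓ+1)) U) ≤ ∑ j, |c j - T j| := by
    unfold rowRes piEta
    simp only [hl1norm, hsum2, div_one]
    calc ∑ i, |(∑ j, zeta η κ x y (α (ℓ+1)) (β (ℓ+1)) U i j) - r i|
        ≤ ∑ i, ∑ j, zeta η κ x y (α (ℓ+1)) (β ℓ) U i j * |c j / T j - 1| := by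
          refine Finset.sum_le_sum (fun i _ => ?_)
          have heq : (∑ j, zeta η κ x y (α (ℓ+1)) (β (ℓ+1)) U i j) - r i
              = ∑ j, zeta η κ x y (α (ℓ+1)) (β ℓ) U i j * (c j / T j - 1) := by
            rw [Finset.sum_congr rfl (fun j _ => hζ2 i j)]
            simp only [mul_sub, mul_one, Finset.sum_sub_distrib, hrow1 i]
          rw [heq]
          refine (Finset.abs_sum_le_sum_abs _ _).trans ?_
          refine Finset.sum_le_sum (fun j _ => ?_)
          rw [abs_mul, abs_of_pos (hzpos _ _ i j)]
      _ = ∑ j, T j * |c j / T j - 1| := by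
          rw [Finset.sum_comm]
          exact Finset.sum_congr rfl (fun j _ => by rw [← Finset.sum_mul])
      _ = ∑ j, |c j - T j| := by
          refine Finset.sum_congr rfl (fun j _ => ?_)
          have hval : T j * (c j / T j - 1) = c j - T j := by
            rw [mul_sub, mul_one, mul_div_cancel₀ _ (hTpos j).ne']
          rw [← hval, abs_mul, abs_of_pos (hTpos j)]
  -- combine everything
  have hBnn : 0 ≤ rowRes r (piEta η κ x y (α (ℓ+1)) (β (ℓ+1)) U) := by
    unfold rowRes
    exact Finset.sum_nonneg (fun i _ => abs_nonneg _)
  have hBsq : (rowRes r (piEta η κ x y (α (ℓ+1)) (β (ℓ+1)) U))^2 ≤ (∑ j, |c j - T j|)^2 :=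
    pow_le_pow_left₀ hBnn hBle 2
  have t1 : η * ((1/2) * (∑ i, |r i - S i / Z|)^2)
      ≤ η * (∑ i, r i * Real.log (r i / (S i / Z))) := mul_le_mul_of_nonneg_left hp1 hη.le
  have t2 : η * ((1/2) * (∑ j, |c j - T j|)^2)
      ≤ η * (∑ j, c j * Real.log (c j / T j)) := mul_le_mul_of_nonneg_left hp2 hη.le
  have t3 : η * (rowRes r (piEta η κ x y (α (ℓ+1)) (β (ℓ+1)) U))^2
      ≤ η * (∑ j, |c j - T j|)^2 := mul_le_mul_of_nonneg_left hBsq hη.le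
  rw [hL2, hL0, e1, e2, hA]
  nlinarith [t1, t2, t3]

end PRWPaper
end
end

section
/- Let η > 0, κ ∈ ℝ^{n×n} with κ_ij > 0, and x̃ = (α̃, β̃, Ũ) ∈ ℝ^n × ℝ^n × ℝ^{d×k} with ‖ζ_η(x̃,κ)‖₁ = 1. Then ⟨π_η(x̃,κ), Z(x̃)⟩ ≤ η (2 log n + ‖log κ‖_var), where ‖log κ‖_var = max_{i,j} log κ_ij − min_{i,j} log κ_ij. -/
open scoped BigOperators
open Matrix

noncomputable section

namespace PRWPaper

theorem ent_bound {ι : Type*} [Fintype ι] (w : ι → ℝ) (hw : ∀ p, 0 < w p)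
    (hs : ∑ p, w p = 1) :
    ∑ p, w p * (- Real.log (w p)) ≤ Real.log (Fintype.card ι) := by
  have hcc : ConcaveOn ℝ (Set.Ioi 0) Real.log := strictConcaveOn_log_Ioi.concaveOn
  have h := hcc.le_map_sum (t := Finset.univ) (w := w) (p := fun p => (w p)⁻¹)
    (fun i _ => (hw i).le) hs (fun i _ => by simpa using inv_pos.mpr (hw i))
  have e1 : ∑ p, w p • (w p)⁻¹ = (Fintype.card ι : ℝ) := by
    simp only [smul_eq_mul]
    rw [Finset.sum_congr rfl (fun p _ => mul_inv_cancel₀ (hw p).ne')]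
    simp
  calc ∑ p, w p * (- Real.log (w p)) = ∑ p, w p • Real.log ((w p)⁻¹) := by
        simp [Real.log_inv, smul_eq_mul]
    _ ≤ Real.log (∑ p, w p • (w p)⁻¹) := h
    _ = _ := by rw [e1]

/-- the complementarity estimate
`⟨π_η(x̃,κ), Z(x̃)⟩ ≤ η (2 log n + ‖log κ‖_var)` when `‖ζ_η(x̃,κ)‖₁ = 1`. -/
theorem statement17 (n d k : ℕ) (hn : 1 ≤ n) (η : ℝ) (hη : 0 < η)
    (κ : Matrix (Fin n) (Fin n) ℝ) (hκ : ∀ i j, 0 < κ i j)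
    (x y : Fin n → Fin d → ℝ) (α β : Fin n → ℝ) (U : Matrix (Fin d) (Fin k) ℝ)
    (hζ : l1norm (zeta η κ x y α β U) = 1) :
    (∑ i, ∑ j, piEta η κ x y α β U i j * (phi x y α β U i j - phiMin x y α β U))
      ≤ η * (2 * Real.log n + varLog κ) := by
  set ζ : Matrix (Fin n) (Fin n) ℝ := zeta η κ x y α β U with hzdef
  have hpos : ∀ i j, 0 < ζ i j := fun i j => mul_pos (hκ i j) (Real.exp_pos _)
  have hsum : ∑ i, ∑ j, ζ i j = 1 := by
    rw [← hζ]
    exact Finset.sum_congr rfl fun i _ =>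
      Finset.sum_congr rfl fun j _ => (abs_of_pos (hpos i j)).symm
  have hpi : ∀ i j, piEta η κ x y α β U i j = ζ i j := by
    intro i j; unfold piEta; rw [← hzdef, hζ, div_one]
  have hle1 : ∀ i j, ζ i j ≤ 1 := by
    intro i j
    calc ζ i j ≤ ∑ j', ζ i j' :=
          Finset.single_le_sum (fun j' _ => (hpos i j').le) (Finset.mem_univ j)
      _ ≤ ∑ i', ∑ j', ζ i' j' :=
          Finset.single_le_sum (f := fun i' => ∑ j', ζ i' j')
            (fun i' _ => Finset.sum_nonneg fun j' _ => (hpos i' j').le) (Finset.mem_univ i)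
      _ = 1 := hsum
  have hphi : ∀ i j, phi x y α β U i j
      = η * (Real.log (κ i j) - Real.log (ζ i j)) := by
    intro i j
    have hl : Real.log (ζ i j) = Real.log (κ i j) + (-(phi x y α β U i j) / η) := by
      rw [hzdef]
      show Real.log (κ i j * Real.exp _) = _
      rw [Real.log_mul (hκ i j).ne' (Real.exp_ne_zero _), Real.log_exp]
    rw [hl]; field_simp; ring
  have hne : Nonempty (Fin n × Fin n) := ⟨(⟨0, hn⟩, ⟨0, hn⟩)⟩
  set M : ℝ := ⨆ p : Fin n × Fin n, Real.log (κ p.1 p.2) with hM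
  set m : ℝ := ⨅ p : Fin n × Fin n, Real.log (κ p.1 p.2) with hm
  -- phiMin ≥ η * m
  have hmin : η * m ≤ phiMin x y α β U := by
    apply le_ciInf
    intro p
    have h1 : m ≤ Real.log (κ p.1 p.2) :=
      ciInf_le (f := fun p : Fin n × Fin n => Real.log (κ p.1 p.2))
        (Finite.bddBelow_range _) p
    have h2 : Real.log (ζ p.1 p.2) ≤ 0 :=
      Real.log_nonpos (hpos p.1 p.2).le (hle1 p.1 p.2)
    rw [hphi]
    nlinarith
  -- entropy bound
  have hsum' : ∑ p : Fin n × Fin n, ζ p.1 p.2 = 1 := by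
    rw [← Finset.univ_product_univ, Finset.sum_product]; exact hsum
  have hent : ∑ i, ∑ j, ζ i j * (- Real.log (ζ i j)) ≤ 2 * Real.log n := by
    have := ent_bound (ι := Fin n × Fin n) (fun p => ζ p.1 p.2)
      (fun p => hpos p.1 p.2) hsum'
    rw [show (∑ i, ∑ j, ζ i j * (- Real.log (ζ i j)))
        = ∑ p : Fin n × Fin n, ζ p.1 p.2 * (- Real.log (ζ p.1 p.2)) by
      rw [← Finset.univ_product_univ, Finset.sum_product]]
    calc ∑ p : Fin n × Fin n, ζ p.1 p.2 * (- Real.log (ζ p.1 p.2))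
        ≤ Real.log (Fintype.card (Fin n × Fin n)) := this
      _ = 2 * Real.log n := by
          rw [Fintype.card_prod, Fintype.card_fin]
          push_cast
          rw [Real.log_mul (by exact_mod_cast (by omega : n ≠ 0))
            (by exact_mod_cast (by omega : n ≠ 0))]
          ring
  -- ⟨ζ, log κ⟩ ≤ M
  have hlogk : ∑ i, ∑ j, ζ i j * Real.log (κ i j) ≤ M := by
    calc ∑ i, ∑ j, ζ i j * Real.log (κ i j)
        ≤ ∑ i, ∑ j, ζ i j * M := by
          refine Finset.sum_le_sum fun i _ => Finset.sum_le_sum fun j _ => ?_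
          exact mul_le_mul_of_nonneg_left
            (le_ciSup (f := fun p : Fin n × Fin n => Real.log (κ p.1 p.2))
              (Finite.bddAbove_range _) (i, j)) (hpos i j).le
      _ = M := by simp only [← Finset.sum_mul]; rw [hsum, one_mul]
  -- expand LHS
  have hexp : (∑ i, ∑ j, piEta η κ x y α β U i j * (phi x y α β U i j - phiMin x y α β U))
      = η * (∑ i, ∑ j, ζ i j * Real.log (κ i j))
        + η * (∑ i, ∑ j, ζ i j * (- Real.log (ζ i j)))
        - phiMin x y α β U := by
    have e1 : ∀ i j, piEta η κ x y α β U i j * (phi x y α β U i j - phiMin x y α β U)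
        = η * (ζ i j * Real.log (κ i j)) + η * (ζ i j * (- Real.log (ζ i j)))
          - phiMin x y α β U * ζ i j := by
      intro i j; rw [hpi, hphi]; ring
    simp only [e1, Finset.sum_add_distrib, Finset.sum_sub_distrib, ← Finset.mul_sum]
    rw [hsum]; ring
  rw [hexp]
  have h1 : η * (∑ i, ∑ j, ζ i j * Real.log (κ i j)) ≤ η * M :=
    mul_le_mul_of_nonneg_left hlogk hη.le
  have h2 : η * (∑ i, ∑ j, ζ i j * (- Real.log (ζ i j))) ≤ η * (2 * Real.log n) :=
    mul_le_mul_of_nonneg_left hent hη.le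
  have : varLog κ = M - m := rfl
  rw [this]
  linarith


end PRWPaper
end
end
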